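/- arXiv:1408.6131 — 2 statements merged into one kernel-verified Lean document; each statement's English description precedes it below -/
import Mathlib

section
/- For every nonnegative integer n, the map w is a bijection from the set of extended link patterns on {1,…,n} to the set of 01-words of length n. -/
open scoped Classical

namespace HFPLpaper2014

noncomputable section

/-! ### 01-words.  `true` represents the letter 1, `false` the letter 0. -/

abbrev Word := List Bool

/-- `|ω|₁`, the number of occurrences of the letter 1. -/
def c1 (w : Word) : ℕ := w.count true

/-- `|ω|₀`, the number of occurrences of the letter 0. -/
def c0 (w : Word) : ℕ := w.count false

/-- `d(ω)`, the number of inversions of `ω`, i.e. of pairs `k < ℓ` with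
`ω_k = 1` and `ω_ℓ = 0`. -/
def dinv : Word → ℕ
  | [] => 0
  | x :: xs => (if x = true then xs.count false else 0) + dinv xs

/-- The dominance order `ω ≤ σ` on 01-words: every prefix of `ω` contains at most as
many ones as the corresponding prefix of `σ`. -/
def wordLE (u v : Word) : Prop :=
  ∀ m : ℕ, (u.take m).count true ≤ (v.take m).count true

/-- the complement `ω̄` of a word -/
def wbar (w : Word) : Word := w.map (fun x => !x)

/-- `ω* = reverse of the complement` of a word -/
def wstar (w : Word) : Word := (w.map (fun x => !x)).reverse
/-! ### Extended link patterns, directed extended link patterns and the matrices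
`M_b(n)`, `M_t(n)`. -/

/-- The role of a point of an extended link pattern: a left point, a right point,
or a point matched with another point. -/
inductive PRole (n : ℕ) : Type where
  | left : PRole n
  | right : PRole n
  | matched : Fin n → PRole n

/-- An extended link pattern on `{1,…,n}`: each point is a left point, a right
point or matched to another point; the matching is symmetric, fixed-point free and
non-crossing; every left point precedes every right point; and no left or right
point lies strictly between two matched points. -/
structure ELP (n : ℕ) where
  role : Fin n → PRole n
  matched_symm : ∀ i j, role i = PRole.matched j → role j = PRole.matched i
  matched_ne : ∀ i j, role i = PRole.matched j → i ≠ j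
  left_lt_right : ∀ i j, role i = PRole.left → role j = PRole.right → i < j
  noncross : ∀ i j k l : Fin n, i < j → j < k → k < l →
    role i = PRole.matched k → role j ≠ PRole.matched l
  nounder : ∀ i j k, role i = PRole.matched j → i < k → k < j →
    ∃ l, role k = PRole.matched l

/-- The letter that the map `w` assigns to the point `i` of an extended link
pattern: `1` at a left point, `0` at a right point, `0` at the smaller and `1` at
the larger point of a matched pair. -/
def letterOf {n : ℕ} (π : ELP n) (i : Fin n) : Bool :=
  match π.role i with
  | PRole.left => true
  | PRole.right => false
  | PRole.matched j => if j < i then true else false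

/-- The map `w` from extended link patterns on `{1,…,n}` to 01-words of length `n`. -/
def wmapL {n : ℕ} (π : ELP n) : {w : Word // w.length = n} :=
  ⟨List.ofFn (fun i => letterOf π i), by simp⟩

/-- the function-word version of the map `w` -/
def wmapF {n : ℕ} (π : ELP n) : Fin n → Bool := fun i => letterOf π i

/-- A directed extended link pattern: an extended link pattern in which every point
is a source or a sink, such that every matched pair consists of one source and one
sink. -/
structure DELP (n : ℕ) extends ELP n where
  isSource : Fin n → Bool
  pair_mixed : ∀ i j, role i = PRole.matched j → isSource i = ! isSource j

/-- the source-sink-word of a directed extended link pattern: `0` at sources,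
`1` at sinks -/
def sswF {n : ℕ} (π : DELP n) : Fin n → Bool := fun i => ! π.isSource i

/-- `RL(π⃗)`, the number of matched pairs whose larger point is the source -/
def RLD {n : ℕ} (π : DELP n) : ℕ :=
  Nat.card {p : Fin n × Fin n // p.1 < p.2 ∧ π.toELP.role p.1 = PRole.matched p.2 ∧
    π.isSource p.2 = true}

/-- `π⃗` witnesses that `w'` is feasible for `w` -/
def FeasibleData {n : ℕ} (w w' : Fin n → Bool) (π : DELP n) : Prop :=
  wmapF π.toELP = w' ∧ sswF π = w

/-- `w'` is feasible for `w` -/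
def Feasible {n : ℕ} (w w' : Fin n → Bool) : Prop := ∃ π : DELP n, FeasibleData w w' π

/-- `g(w,w') = RL(π⃗)` for the (unique) directed extended link pattern witnessing
feasibility -/
def gfun {n : ℕ} (w w' : Fin n → Bool) : ℕ :=
  if h : Feasible w w' then RLD h.choose else 0

/-- `w'` is left-points-fixing feasible for `w` (the witnessing pattern is
left-hand-incoming, i.e. all left points are sinks). -/
def lpfFeasible {n : ℕ} (w w' : Fin n → Bool) : Prop :=
  ∃ π : DELP n, FeasibleData w w' π ∧
    ∀ i, π.toELP.role i = PRole.left → π.isSource i = false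

/-- `w'` is right-points-fixing feasible for `w` (the witnessing pattern is
right-hand-outgoing, i.e. all right points are sources). -/
def rpfFeasible {n : ℕ} (w w' : Fin n → Bool) : Prop :=
  ∃ π : DELP n, FeasibleData w w' π ∧
    ∀ i, π.toELP.role i = PRole.right → π.isSource i = true

/-- The matrix `M_b(n)` over `ℚ(q)`. -/
def Mb (n : ℕ) : Matrix (Fin n → Bool) (Fin n → Bool) (RatFunc ℚ) :=
  Matrix.of fun w w' =>
    if lpfFeasible w w' then (RatFunc.X : RatFunc ℚ) ^ (gfun w w') else 0

/-- The matrix `M_t(n)` over `ℚ(q)`. -/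
def Mt (n : ℕ) : Matrix (Fin n → Bool) (Fin n → Bool) (RatFunc ℚ) :=
  Matrix.of fun w w' =>
    if rpfFeasible w w' then (RatFunc.X : RatFunc ℚ) ^ (-(gfun w w' : ℤ)) else 0

/-- a 01-word of length `n` (as a list) viewed as a function-word -/
def fnw (n : ℕ) (w : Word) : Fin n → Bool := fun i => w.getD i false

namespace Bij

open Finset

/-! ### Discrete intermediate value lemmas -/

lemma ivt_up (g : ℕ → ℤ) (hstep : ∀ m, g (m+1) ≤ g m + 1) :
    ∀ a b : ℕ, a ≤ b → ∀ c : ℤ, g a ≤ c → c ≤ g b → ∃ m, a ≤ m ∧ m ≤ b ∧ g m = c := by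
  intro a b hab
  induction b, hab using Nat.le_induction with
  | base => intro c h1 h2; exact ⟨a, le_refl _, le_refl _, le_antisymm h1 h2⟩
  | succ b hab ih =>
    intro c h1 h2
    by_cases hc : c ≤ g b
    · obtain ⟨m, hm1, hm2, hm3⟩ := ih c h1 hc
      exact ⟨m, hm1, hm2.trans (Nat.le_succ b), hm3⟩
    · push_neg at hc
      have := hstep b
      exact ⟨b+1, by omega, le_refl _, by omega⟩

lemma ivt_down (g : ℕ → ℤ) (hstep : ∀ m, g m - 1 ≤ g (m+1)) (a b : ℕ) (hab : a ≤ b)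
    (c : ℤ) (h1 : c ≤ g a) (h2 : g b ≤ c) : ∃ m, a ≤ m ∧ m ≤ b ∧ g m = c := by
  obtain ⟨m, hm1, hm2, hm3⟩ := ivt_up (fun m => -(g m))
    (fun m => show -(g (m+1)) ≤ -(g m) + 1 by have := hstep m; omega)
    a b hab (-c) (show -(g a) ≤ -c by omega) (show -c ≤ -(g b) by omega)
  have hm3' : -(g m) = -c := hm3
  exact ⟨m, hm1, hm2, by omega⟩

/-! ### The height function of a word -/

variable {n : ℕ}

/-- extension of a word on `Fin n` to all of `ℕ` -/
def wex (w : Fin n → Bool) : ℕ → Bool := fun k => if h : k < n then w ⟨k, h⟩ else false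

lemma wex_coe (w : Fin n → Bool) (i : Fin n) : wex w i = w i := by
  simp [wex]

/-- the height function: number of `0`s minus number of `1`s among the first `m` letters -/
def F (w : Fin n → Bool) (m : ℕ) : ℤ :=
  (((Finset.range m).filter fun k => wex w k = false).card : ℤ) -
  ((Finset.range m).filter fun k => wex w k = true).card

lemma F_succ (w : Fin n → Bool) (m : ℕ) :
    F w (m+1) = F w m + (if wex w m = true then -1 else 1) := by
  unfold F
  rw [Finset.range_add_one, Finset.filter_insert, Finset.filter_insert]
  have hm : ∀ p : ℕ → Prop, m ∉ (Finset.range m).filter p := by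
    intro p hp
    simp at hp
  cases h : wex w m <;>
    simp [h, Finset.card_insert_of_notMem (hm _)] <;> ring

lemma F_succ_of_false {w : Fin n → Bool} {m : ℕ} (h : wex w m = false) :
    F w (m+1) = F w m + 1 := by rw [F_succ, h]; simp

lemma F_succ_of_true {w : Fin n → Bool} {m : ℕ} (h : wex w m = true) :
    F w (m+1) = F w m - 1 := by rw [F_succ, h]; simp; ring

lemma F_step_le (w : Fin n → Bool) (m : ℕ) : F w (m+1) ≤ F w m + 1 := by
  rw [F_succ]; split <;> omega

lemma F_step_ge (w : Fin n → Bool) (m : ℕ) : F w m - 1 ≤ F w (m+1) := by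
  rw [F_succ]; split <;> omega

lemma F_succ_ne (w : Fin n → Bool) (m : ℕ) : F w (m+1) ≠ F w m := by
  rw [F_succ]; split <;> omega

lemma F_diff (w : Fin n → Bool) {a b : ℕ} (hab : a ≤ b) :
    F w b = F w a + ((Finset.Ico a b).filter fun k => wex w k = false).card -
      ((Finset.Ico a b).filter fun k => wex w k = true).card := by
  unfold F
  rw [Finset.range_eq_Ico, Finset.range_eq_Ico,
    ← Finset.Ico_union_Ico_eq_Ico (Nat.zero_le a) hab, Finset.filter_union, Finset.filter_union,
    Finset.card_union_of_disjoint
      (Finset.disjoint_filter_filter (Finset.Ico_disjoint_Ico_consecutive 0 a b)),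
    Finset.card_union_of_disjoint
      (Finset.disjoint_filter_filter (Finset.Ico_disjoint_Ico_consecutive 0 a b))]
  push_cast
  ring

/-! ### Canonical pairs of a word -/

/-- `i` and `j` form a canonical matched pair of the word `w`. -/
def IsPair (w : Fin n → Bool) (i j : Fin n) : Prop :=
  i < j ∧ w i = false ∧ w j = true ∧ F w ((j : ℕ)+1) = F w i ∧
  ∀ m : ℕ, (i : ℕ) < m → m ≤ (j : ℕ) → F w m ≠ F w i

lemma gt_of_no_return {w : Fin n → Bool} {i : Fin n} (h0 : w i = false) {B : ℕ}
    (hne : ∀ m, (i:ℕ) < m → m < B → F w m ≠ F w i) :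
    ∀ m, (i:ℕ) < m → m < B → F w i < F w m := by
  intro m h1 h2
  rcases lt_or_ge (F w i) (F w m) with h' | h'
  · exact h'
  · exfalso
    have hfi1 : F w ((i:ℕ)+1) = F w i + 1 := F_succ_of_false (by rw [wex_coe]; exact h0)
    obtain ⟨m', hm1, hm2, hm3⟩ := ivt_down (F w) (F_step_ge w) ((i:ℕ)+1) m (by omega)
      (F w i) (by omega) h'
    exact hne m' (by omega) (by omega) hm3

lemma pair_gt {w : Fin n → Bool} {i j : Fin n} (h : IsPair w i j) :
    ∀ m : ℕ, (i:ℕ) < m → m ≤ (j:ℕ) → F w i < F w m := by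
  intro m h1 h2
  exact gt_of_no_return (B := (j:ℕ)+1) h.2.1
    (fun m' hm1 hm2 => h.2.2.2.2 m' hm1 (by omega)) m h1 (by omega)

lemma pair_right_unique {w : Fin n → Bool} {i j j' : Fin n}
    (h : IsPair w i j) (h' : IsPair w i j') : j = j' := by
  rcases lt_trichotomy j j' with hlt | he | hlt
  · have hv : (j:ℕ) < (j':ℕ) := hlt
    have hij : (i:ℕ) < (j:ℕ) := h.1
    exact absurd h.2.2.2.1 (h'.2.2.2.2 ((j:ℕ)+1) (by omega) (by omega))
  · exact he
  · have hv : (j':ℕ) < (j:ℕ) := hlt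
    have hij : (i:ℕ) < (j':ℕ) := h'.1
    exact absurd h'.2.2.2.1 (h.2.2.2.2 ((j':ℕ)+1) (by omega) (by omega))

lemma pair_left_unique {w : Fin n → Bool} {i i' j : Fin n}
    (h : IsPair w i j) (h' : IsPair w i' j) : i = i' := by
  have hFe : F w i = F w i' := h.2.2.2.1 ▸ h'.2.2.2.1
  rcases lt_trichotomy i i' with hlt | he | hlt
  · have hv : (i:ℕ) < (i':ℕ) := hlt
    have hij : (i':ℕ) < (j:ℕ) := h'.1
    exact absurd hFe.symm (h.2.2.2.2 (i':ℕ) (by omega) (by omega))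
  · exact he
  · have hv : (i':ℕ) < (i:ℕ) := hlt
    have hij : (i:ℕ) < (j:ℕ) := h.1
    exact absurd hFe (h'.2.2.2.2 (i:ℕ) (by omega) (by omega))

lemma pair_noncross {w : Fin n → Bool} {i j k l : Fin n} (h1 : i < j) (h2 : j < k) (h3 : k < l)
    (hik : IsPair w i k) : ¬ IsPair w j l := by
  intro hjl
  have hv1 : (i:ℕ) < (j:ℕ) := h1
  have hv2 : (j:ℕ) < (k:ℕ) := h2
  have hv3 : (k:ℕ) < (l:ℕ) := h3
  have hj : F w i < F w j := pair_gt hik (j:ℕ) hv1 (le_of_lt hv2)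
  have hk1 : F w ((k:ℕ)+1) = F w i := hik.2.2.2.1
  have := pair_gt hjl ((k:ℕ)+1) (by omega) (by omega)
  omega

lemma exists_pair_of_return {w : Fin n → Bool} {i : Fin n} (h0 : w i = false)
    (hm : ∃ m, (i:ℕ) < m ∧ m ≤ n ∧ F w m = F w i) : ∃ j, IsPair w i j := by
  obtain ⟨mw, hmw1, hmw2, hmw3⟩ := hm
  have hex : ∃ m, (i:ℕ) < m ∧ F w m = F w i := ⟨mw, hmw1, hmw3⟩
  set m0 := Nat.find hex with hm0
  obtain ⟨hP1, hP2⟩ : (i:ℕ) < m0 ∧ F w m0 = F w i := Nat.find_spec hex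
  have hm0n : m0 ≤ n := le_trans (Nat.find_min' hex ⟨hmw1, hmw3⟩) hmw2
  have hne : ∀ m, (i:ℕ) < m → m < m0 → F w m ≠ F w i := by
    intro m h1 h2 hc
    exact Nat.find_min hex h2 ⟨h1, hc⟩
  have hfi1 : F w ((i:ℕ)+1) = F w i + 1 := F_succ_of_false (by rw [wex_coe]; exact h0)
  have hi2 : (i:ℕ) + 2 ≤ m0 := by
    rcases Nat.lt_or_ge m0 ((i:ℕ)+2) with h | h
    · exfalso
      have : m0 = (i:ℕ)+1 := by omega
      rw [this] at hP2
      omega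
    · exact h
  have hgt : ∀ m, (i:ℕ) < m → m < m0 → F w i < F w m := gt_of_no_return h0 hne
  have hjn : m0 - 1 < n := by omega
  refine ⟨⟨m0 - 1, hjn⟩, ?_, h0, ?_, ?_, ?_⟩
  · show (i:ℕ) < m0 - 1
    omega
  · show w ⟨m0 - 1, hjn⟩ = true
    have hgt' : F w i < F w (m0 - 1) := hgt (m0-1) (by omega) (by omega)
    have heq : m0 - 1 + 1 = m0 := by omega
    rcases hb : wex w (m0 - 1) with h | h
    · exfalso
      have := F_succ_of_false hb
      rw [heq] at this
      omega
    · have := wex_coe w ⟨m0 - 1, hjn⟩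
      simp only [Fin.val_mk] at this
      rw [← this, hb]
  · show F w ((m0 - 1)+1) = F w i
    have heq : m0 - 1 + 1 = m0 := by omega
    rw [heq]; exact hP2
  · intro m h1 h2
    exact hne m h1 (by simp only [Fin.val_mk] at h2; omega)

lemma exists_pair_of_preturn {w : Fin n → Bool} {k : Fin n} (h1 : w k = true)
    (hm : ∃ m, m ≤ (k:ℕ) ∧ F w m = F w ((k:ℕ)+1)) : ∃ i, IsPair w i k := by
  obtain ⟨mw, hmw1, hmw2⟩ := hm
  set c := F w ((k:ℕ)+1) with hc
  set m1 := Nat.findGreatest (fun m => F w m = c) (k:ℕ) with hm1def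
  have hm1le : m1 ≤ (k:ℕ) := Nat.findGreatest_le _
  have hm1P : F w m1 = c := Nat.findGreatest_spec (P := fun m => F w m = c) hmw1 hmw2
  have hne : ∀ m, m1 < m → m ≤ (k:ℕ) → F w m ≠ c := by
    intro m hma hmb
    exact Nat.findGreatest_is_greatest (P := fun m => F w m = c) hma hmb
  have hkstep : F w ((k:ℕ)+1) = F w (k:ℕ) - 1 := F_succ_of_true (by rw [wex_coe]; exact h1)
  have hm1k : m1 < (k:ℕ) := by
    rcases Nat.lt_or_ge m1 (k:ℕ) with h | h
    · exact h
    · exfalso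
      have : m1 = (k:ℕ) := by omega
      rw [this] at hm1P
      omega
  have hw0 : wex w m1 = false := by
    rcases hb : wex w m1 with h | h
    · rfl
    · exfalso
      have hstep := F_succ_of_true hb
      obtain ⟨m', hma, hmb, hmc⟩ := ivt_up (F w) (F_step_le w) (m1+1) (k:ℕ) (by omega) c
        (by omega) (by omega)
      exact hne m' (by omega) hmb hmc
  have hm1n : m1 < n := lt_of_le_of_lt hm1le k.isLt
  refine ⟨⟨m1, hm1n⟩, ?_, ?_, h1, hm1P.symm, ?_⟩
  · show m1 < (k:ℕ)
    exact hm1k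
  · show w ⟨m1, hm1n⟩ = false
    have := wex_coe w ⟨m1, hm1n⟩
    simp only [Fin.val_mk] at this
    rw [← this, hw0]
  · intro m hma hmb hcc
    simp only [Fin.val_mk] at hma
    exact hne m hma hmb (by rw [hcc, hm1P])

/-! ### letter lemmas -/

lemma letterOf_left {π : ELP n} {i : Fin n} (h : π.role i = PRole.left) :
    letterOf π i = true := by
  unfold letterOf; rw [h]

lemma letterOf_right {π : ELP n} {i : Fin n} (h : π.role i = PRole.right) :
    letterOf π i = false := by
  unfold letterOf; rw [h]

lemma letterOf_matched {π : ELP n} {i j : Fin n} (h : π.role i = PRole.matched j) :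
    letterOf π i = if j < i then true else false := by
  unfold letterOf; rw [h]

lemma letterOf_matched_lt {π : ELP n} {i j : Fin n} (h : π.role i = PRole.matched j)
    (hlt : i < j) : letterOf π i = false := by
  rw [letterOf_matched h, if_neg (by intro hc; exact absurd (lt_trans hc hlt) (lt_irrefl j))]

lemma letterOf_matched_gt {π : ELP n} {i j : Fin n} (h : π.role i = PRole.matched j)
    (hlt : j < i) : letterOf π i = true := by
  rw [letterOf_matched h, if_pos hlt]

/-! ### The canonical extended link pattern of a word -/

/-- the canonical role of the point `i` for the word `w` -/
def canRole (w : Fin n → Bool) (i : Fin n) : PRole n :=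
  if h : ∃ j, IsPair w i j then PRole.matched h.choose
  else if h' : ∃ j, IsPair w j i then PRole.matched h'.choose
  else if w i = true then PRole.left else PRole.right

lemma canRole_matched {w : Fin n → Bool} {i j : Fin n} (h : canRole w i = PRole.matched j) :
    IsPair w i j ∨ IsPair w j i := by
  unfold canRole at h
  split_ifs at h with h1 h2 h3
  · left; have := h1.choose_spec; cases h; exact this
  · right; have := h2.choose_spec; cases h; exact this
  all_goals exact PRole.noConfusion h

lemma canRole_of_pair {w : Fin n → Bool} {i j : Fin n} (h : IsPair w i j) :
    canRole w i = PRole.matched j ∧ canRole w j = PRole.matched i := by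
  constructor
  · unfold canRole
    have h1 : ∃ j', IsPair w i j' := ⟨j, h⟩
    rw [dif_pos h1, pair_right_unique h1.choose_spec h]
  · unfold canRole
    have h1 : ¬ ∃ j', IsPair w j j' := by
      rintro ⟨j', hj'⟩
      have hf := hj'.2.1
      rw [h.2.2.1] at hf
      exact Bool.noConfusion hf
    have h2 : ∃ i', IsPair w i' j := ⟨i, h⟩
    rw [dif_neg h1, dif_pos h2, pair_left_unique h2.choose_spec h]

lemma canRole_left {w : Fin n → Bool} {i : Fin n} (h : canRole w i = PRole.left) :
    w i = true ∧ (¬ ∃ j, IsPair w i j) ∧ ¬ ∃ j, IsPair w j i := by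
  unfold canRole at h
  split_ifs at h with h1 h2 h3
  all_goals first
    | exact PRole.noConfusion h
    | exact ⟨h3, h1, h2⟩

lemma canRole_right {w : Fin n → Bool} {i : Fin n} (h : canRole w i = PRole.right) :
    w i = false ∧ (¬ ∃ j, IsPair w i j) ∧ ¬ ∃ j, IsPair w j i := by
  unfold canRole at h
  split_ifs at h with h1 h2 h3
  all_goals first
    | exact PRole.noConfusion h
    | exact ⟨by simpa using h3, h1, h2⟩

lemma left_no_preturn {w : Fin n → Bool} {i : Fin n} (hL : w i = true)
    (hnp : ¬ ∃ j, IsPair w j i) :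
    ∀ m, m ≤ (i:ℕ) → F w ((i:ℕ)+1) < F w m := by
  have hne : ∀ m, m ≤ (i:ℕ) → F w m ≠ F w ((i:ℕ)+1) := by
    intro m hm hc
    exact hnp (exists_pair_of_preturn hL ⟨m, hm, hc⟩)
  intro m hm
  have hstep : F w ((i:ℕ)+1) = F w (i:ℕ) - 1 := F_succ_of_true (by rw [wex_coe]; exact hL)
  rcases lt_or_ge (F w ((i:ℕ)+1)) (F w m) with h | h
  · exact h
  · exfalso
    obtain ⟨m', hm1, hm2, hm3⟩ := ivt_up (F w) (F_step_le w) m (i:ℕ) hm (F w ((i:ℕ)+1)) h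
      (by omega)
    exact hne m' hm2 hm3

lemma right_no_return {w : Fin n → Bool} {i : Fin n} (hR : w i = false)
    (hnp : ¬ ∃ j, IsPair w i j) :
    ∀ m, (i:ℕ) < m → m ≤ n → F w i < F w m := by
  intro m h1 h2
  refine gt_of_no_return (B := n+1) hR ?_ m h1 (by omega)
  intro m' hm1 hm2 hc
  exact hnp (exists_pair_of_return hR ⟨m', hm1, by omega, hc⟩)

/-- the canonical extended link pattern of a word -/
def canELP (w : Fin n → Bool) : ELP n where
  role := canRole w
  matched_symm := by
    intro i j h
    rcases canRole_matched h with hp | hp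
    · exact (canRole_of_pair hp).2
    · exact (canRole_of_pair hp).1
  matched_ne := by
    intro i j h
    rcases canRole_matched h with hp | hp
    · exact ne_of_lt hp.1
    · exact ne_of_gt hp.1
  left_lt_right := by
    intro i j hi hj
    obtain ⟨hL, _, hnpL⟩ := canRole_left hi
    obtain ⟨hR, hnpR, _⟩ := canRole_right hj
    rcases lt_trichotomy i j with h | h | h
    · exact h
    · exfalso; rw [h, hR] at hL; exact Bool.noConfusion hL
    · exfalso
      have hv : (j:ℕ) < (i:ℕ) := h
      have h1 := left_no_preturn hL hnpL (j:ℕ) (by omega)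
      have h2 := right_no_return hR hnpR ((i:ℕ)+1) (by omega) i.isLt
      omega
  noncross := by
    intro i j k l h1 h2 h3 hik hjl
    have hv1 : (i:ℕ) < (j:ℕ) := h1
    have hv2 : (j:ℕ) < (k:ℕ) := h2
    have hv3 : (k:ℕ) < (l:ℕ) := h3
    have hpik : IsPair w i k := by
      rcases canRole_matched hik with hp | hp
      · exact hp
      · exfalso; have : (k:ℕ) < (i:ℕ) := hp.1; omega
    have hpjl : IsPair w j l := by
      rcases canRole_matched hjl with hp | hp
      · exact hp
      · exfalso; have : (l:ℕ) < (j:ℕ) := hp.1; omega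
    exact pair_noncross h1 h2 h3 hpik hpjl
  nounder := by
    intro i j k hij hik hkj
    have hv1 : (i:ℕ) < (k:ℕ) := hik
    have hv2 : (k:ℕ) < (j:ℕ) := hkj
    have hpij : IsPair w i j := by
      rcases canRole_matched hij with hp | hp
      · exact hp
      · exfalso; have : (j:ℕ) < (i:ℕ) := hp.1; omega
    have hFk : F w i < F w (k:ℕ) := pair_gt hpij (k:ℕ) hv1 (by omega)
    rcases hwk : w k with hh | hh
    · -- w k = false : k has a return inside (k, j]
      have hstep : F w ((k:ℕ)+1) = F w (k:ℕ) + 1 := F_succ_of_false (by rw [wex_coe, hwk])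
      have hFj1 : F w ((j:ℕ)+1) = F w i := hpij.2.2.2.1
      obtain ⟨m', hm1, hm2, hm3⟩ := ivt_down (F w) (F_step_ge w) ((k:ℕ)+1) ((j:ℕ)+1)
        (by omega) (F w (k:ℕ)) (by omega) (by omega)
      have hret : ∃ m, (k:ℕ) < m ∧ m ≤ n ∧ F w m = F w k := by
        refine ⟨m', by omega, by have := j.isLt; omega, hm3⟩
      obtain ⟨l, hl⟩ := exists_pair_of_return hwk hret
      have h1 : ∃ j', IsPair w k j' := ⟨l, hl⟩
      refine ⟨h1.choose, ?_⟩
      show canRole w k = _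
      unfold canRole
      rw [dif_pos h1]
    · -- w k = true : k has a pre-return at some m ≤ k
      have hstep : F w ((k:ℕ)+1) = F w (k:ℕ) - 1 := F_succ_of_true (by rw [wex_coe, hwk])
      have hpre : ∃ m, m ≤ (k:ℕ) ∧ F w m = F w ((k:ℕ)+1) := by
        rcases eq_or_lt_of_le (show F w i ≤ F w ((k:ℕ)+1) by omega) with h | h
        · exact ⟨(i:ℕ), by omega, h⟩
        · obtain ⟨m', hm1, hm2, hm3⟩ := ivt_up (F w) (F_step_le w) (i:ℕ) (k:ℕ) (by omega)
            (F w ((k:ℕ)+1)) (by omega) (by omega)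
          exact ⟨m', hm2, hm3⟩
      obtain ⟨l, hl⟩ := exists_pair_of_preturn hwk hpre
      have h1 : ¬ ∃ j', IsPair w k j' := by
        rintro ⟨j', hj'⟩
        have hf := hj'.2.1
        rw [hwk] at hf
        exact Bool.noConfusion hf
      have h2 : ∃ l', IsPair w l' k := ⟨l, hl⟩
      refine ⟨h2.choose, ?_⟩
      show canRole w k = _
      unfold canRole
      rw [dif_neg h1, dif_pos h2]

lemma letterOf_canELP (w : Fin n → Bool) (i : Fin n) : letterOf (canELP w) i = w i := by
  have hrole : (canELP w).role i = canRole w i := rfl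
  rcases hr : canRole w i with _ | _ | j
  · rw [letterOf_left (hrole.trans hr), (canRole_left hr).1]
  · rw [letterOf_right (hrole.trans hr), (canRole_right hr).1]
  · rcases canRole_matched hr with hp | hp
    · rw [letterOf_matched_lt (hrole.trans hr) hp.1, hp.2.1]
    · rw [letterOf_matched_gt (hrole.trans hr) hp.1, hp.2.2.1]

lemma wmapF_canELP (w : Fin n → Bool) : wmapF (canELP w) = w := by
  funext i
  exact letterOf_canELP w i

/-! ### Extended link patterns determine canonical pairs -/

lemma lt_of_letter_true {π : ELP n} {k l : Fin n} (hr : π.role k = PRole.matched l)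
    (hl : letterOf π k = true) : l < k := by
  rw [letterOf_matched hr] at hl
  by_contra hc
  rw [if_neg hc] at hl
  exact Bool.noConfusion hl

lemma lt_of_letter_false {π : ELP n} {k l : Fin n} (hr : π.role k = PRole.matched l)
    (hl : letterOf π k = false) : k < l := by
  have hne := π.matched_ne k l hr
  rcases lt_trichotomy k l with h | h | h
  · exact h
  · exact absurd h hne
  · rw [letterOf_matched_gt hr h] at hl; exact Bool.noConfusion hl

lemma elp_between {π : ELP n} {i j k l : Fin n} (hij : π.role i = PRole.matched j)
    (hik : i < k) (hkj : k < j) (hkl : π.role k = PRole.matched l) : i < l ∧ l < j := by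
  have hsym := π.matched_symm k l hkl
  have hli : l ≠ i := by
    intro he
    rw [he] at hsym
    have hjk : j = k := by injection hij.symm.trans hsym
    exact absurd hkj (by rw [hjk] at hkj ⊢; exact lt_irrefl k)
  have hlj : l ≠ j := by
    intro he
    rw [he] at hsym
    have hik' : i = k := by injection (π.matched_symm i j hij).symm.trans hsym
    exact absurd hik (by rw [← hik']; exact lt_irrefl i)
  rcases lt_trichotomy l i with h | h | h
  · exact absurd hij (π.noncross l i k j h hik hkj hsym)
  · exact absurd h hli
  · rcases lt_trichotomy l j with h' | h' | h'
    · exact ⟨h, h'⟩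
    · exact absurd h' hlj
    · exact absurd hkl (π.noncross i k j l hik hkj h' hij)

/-- the partner of a point of an extended link pattern, as a function on `ℕ` -/
def partnerN (π : ELP n) (m : ℕ) : ℕ :=
  if h : m < n then
    match π.role ⟨m, h⟩ with
    | PRole.matched l => (l : ℕ)
    | _ => m
  else m

lemma partnerN_eq (π : ELP n) {m : ℕ} (h : m < n) {l : Fin n}
    (hr : π.role ⟨m, h⟩ = PRole.matched l) : partnerN π m = (l : ℕ) := by
  unfold partnerN
  rw [dif_pos h, hr]

lemma wex_wmapF (π : ELP n) (m : ℕ) (h : m < n) :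
    wex (wmapF π) m = letterOf π ⟨m, h⟩ := by
  unfold wex wmapF
  rw [dif_pos h]

/-- counting via the partner injection -/
lemma card_filter_le {π : ELP n} {a b : ℕ} (hb : b ≤ n) (bb : Bool) (T : Finset ℕ)
    (H : ∀ (k : Fin n), a ≤ (k:ℕ) → (k:ℕ) < b → letterOf π k = bb →
      ∃ l : Fin n, π.role k = PRole.matched l ∧ (l:ℕ) ∈ T) :
    ((Finset.Ico a b).filter fun m => wex (wmapF π) m = bb).card ≤ T.card := by
  apply Finset.card_le_card_of_injOn (partnerN π)
  · intro m hm
    rw [Finset.mem_coe, Finset.mem_filter, Finset.mem_Ico] at hm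
    obtain ⟨⟨hma, hmb⟩, hmw⟩ := hm
    have hmn : m < n := lt_of_lt_of_le hmb hb
    rw [wex_wmapF π m hmn] at hmw
    obtain ⟨l, hl1, hl2⟩ := H ⟨m, hmn⟩ hma hmb hmw
    rwa [Finset.mem_coe, partnerN_eq π hmn hl1]
  · intro m1 hm1 m2 hm2 he
    rw [Finset.mem_coe, Finset.mem_filter, Finset.mem_Ico] at hm1 hm2
    obtain ⟨⟨hma1, hmb1⟩, hmw1⟩ := hm1
    obtain ⟨⟨hma2, hmb2⟩, hmw2⟩ := hm2
    have hmn1 : m1 < n := lt_of_lt_of_le hmb1 hb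
    have hmn2 : m2 < n := lt_of_lt_of_le hmb2 hb
    rw [wex_wmapF π m1 hmn1] at hmw1
    rw [wex_wmapF π m2 hmn2] at hmw2
    obtain ⟨l1, hl11, _⟩ := H ⟨m1, hmn1⟩ hma1 hmb1 hmw1
    obtain ⟨l2, hl21, _⟩ := H ⟨m2, hmn2⟩ hma2 hmb2 hmw2
    rw [partnerN_eq π hmn1 hl11, partnerN_eq π hmn2 hl21] at he
    have hle : l1 = l2 := Fin.ext he
    rw [hle] at hl11
    have h1 := π.matched_symm _ _ hl11
    have h2 := π.matched_symm _ _ hl21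
    have : (⟨m1, hmn1⟩ : Fin n) = ⟨m2, hmn2⟩ := by injection h1.symm.trans h2
    exact congrArg Fin.val this

lemma elp_pair {π : ELP n} {i j : Fin n} (hr : π.role i = PRole.matched j) (hij : i < j) :
    IsPair (wmapF π) i j := by
  have hsym := π.matched_symm i j hr
  have hvij : (i:ℕ) < (j:ℕ) := hij
  have hwi : letterOf π i = false := letterOf_matched_lt hr hij
  have hwj : letterOf π j = true := letterOf_matched_gt hsym hij
  have hiw : wex (wmapF π) (i:ℕ) = false := by
    rw [wex_wmapF π _ i.isLt]; simpa [Fin.eta] using hwi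
  have hjw : wex (wmapF π) (j:ℕ) = true := by
    rw [wex_wmapF π _ j.isLt]; simpa [Fin.eta] using hwj
  -- the common "interior point" extraction
  have interior : ∀ k : Fin n, i < k → k < j →
      ∃ l : Fin n, π.role k = PRole.matched l ∧ i < l ∧ l < j := by
    intro k h1 h2
    obtain ⟨l, hl⟩ := π.nounder i j k hr h1 h2
    obtain ⟨ha, hb⟩ := elp_between hr h1 h2 hl
    exact ⟨l, hl, ha, hb⟩
  have hjn : (j:ℕ) + 1 ≤ n := j.isLt
  -- balance on [i, j]
  have hb1 : ((Finset.Ico (i:ℕ) ((j:ℕ)+1)).filter fun m => wex (wmapF π) m = true).card ≤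
      ((Finset.Ico (i:ℕ) ((j:ℕ)+1)).filter fun m => wex (wmapF π) m = false).card := by
    apply card_filter_le hjn true
    intro k hka hkb hkl
    rcases eq_or_lt_of_le hka with he | hlt
    · exfalso
      have hki : k = i := Fin.ext he.symm
      rw [hki, hwi] at hkl
      exact Bool.noConfusion hkl
    · have hik : i < k := hlt
      rcases eq_or_lt_of_le (show (k:ℕ) ≤ (j:ℕ) by omega) with he | hlt2
      · have hkj : k = j := Fin.ext he
        refine ⟨i, by rw [hkj]; exact hsym, ?_⟩
        rw [Finset.mem_filter, Finset.mem_Ico]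
        exact ⟨⟨le_refl _, by omega⟩, hiw⟩
      · have hkj : k < j := hlt2
        obtain ⟨l, hl, hil, hlj⟩ := interior k hik hkj
        have hlk : l < k := lt_of_letter_true hl hkl
        have hvil : (i:ℕ) < (l:ℕ) := hil
        have hvlk : (l:ℕ) < (k:ℕ) := hlk
        refine ⟨l, hl, ?_⟩
        rw [Finset.mem_filter, Finset.mem_Ico]
        refine ⟨⟨by omega, by omega⟩, ?_⟩
        rw [wex_wmapF π _ l.isLt]
        simpa [Fin.eta] using letterOf_matched_lt (π.matched_symm k l hl) hlk
  have hb2 : ((Finset.Ico (i:ℕ) ((j:ℕ)+1)).filter fun m => wex (wmapF π) m = false).card ≤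
      ((Finset.Ico (i:ℕ) ((j:ℕ)+1)).filter fun m => wex (wmapF π) m = true).card := by
    apply card_filter_le hjn false
    intro k hka hkb hkl
    rcases eq_or_lt_of_le hka with he | hlt
    · have hki : k = i := Fin.ext he.symm
      refine ⟨j, by rw [hki]; exact hr, ?_⟩
      rw [Finset.mem_filter, Finset.mem_Ico]
      exact ⟨⟨by omega, by omega⟩, hjw⟩
    · have hik : i < k := hlt
      rcases eq_or_lt_of_le (show (k:ℕ) ≤ (j:ℕ) by omega) with he | hlt2
      · exfalso
        have hkj : k = j := Fin.ext he
        rw [hkj, hwj] at hkl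
        exact Bool.noConfusion hkl
      · have hkj : k < j := hlt2
        obtain ⟨l, hl, hil, hlj⟩ := interior k hik hkj
        have hlk : k < l := lt_of_letter_false hl hkl
        have hvlj : (l:ℕ) < (j:ℕ) := hlj
        have hvkl : (k:ℕ) < (l:ℕ) := hlk
        have hvil : (i:ℕ) < (l:ℕ) := hil
        refine ⟨l, hl, ?_⟩
        rw [Finset.mem_filter, Finset.mem_Ico]
        refine ⟨⟨by omega, by omega⟩, ?_⟩
        rw [wex_wmapF π _ l.isLt]
        simpa [Fin.eta] using letterOf_matched_gt (π.matched_symm k l hl) hlk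
  have hdiff := F_diff (wmapF π) (show (i:ℕ) ≤ (j:ℕ)+1 by omega)
  have hbal : F (wmapF π) ((j:ℕ)+1) = F (wmapF π) (i:ℕ) := by
    have := le_antisymm hb1 hb2
    omega
  -- minimality
  have hmin : ∀ m, (i:ℕ) < m → m ≤ (j:ℕ) → F (wmapF π) m ≠ F (wmapF π) (i:ℕ) := by
    intro m hm1 hm2
    have hmn : m ≤ n := by omega
    have hi_mem : (i:ℕ) ∈ (Finset.Ico (i:ℕ) m).filter fun m' => wex (wmapF π) m' = false := by
      rw [Finset.mem_filter, Finset.mem_Ico]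
      exact ⟨⟨le_refl _, hm1⟩, hiw⟩
    have hc1 : ((Finset.Ico (i:ℕ) m).filter fun m' => wex (wmapF π) m' = true).card ≤
        (((Finset.Ico (i:ℕ) m).filter fun m' => wex (wmapF π) m' = false).erase (i:ℕ)).card := by
      apply card_filter_le hmn true
      intro k hka hkb hkl
      rcases eq_or_lt_of_le hka with he | hlt
      · exfalso
        have hki : k = i := Fin.ext he.symm
        rw [hki, hwi] at hkl
        exact Bool.noConfusion hkl
      · have hik : i < k := hlt
        have hkj : k < j := by
          have : (k:ℕ) < (j:ℕ) := by omega
          exact this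
        obtain ⟨l, hl, hil, hlj⟩ := interior k hik hkj
        have hlk : l < k := lt_of_letter_true hl hkl
        have hvil : (i:ℕ) < (l:ℕ) := hil
        have hvlk : (l:ℕ) < (k:ℕ) := hlk
        refine ⟨l, hl, Finset.mem_erase.mpr ⟨by omega, ?_⟩⟩
        rw [Finset.mem_filter, Finset.mem_Ico]
        refine ⟨⟨by omega, by omega⟩, ?_⟩
        rw [wex_wmapF π _ l.isLt]
        simpa [Fin.eta] using letterOf_matched_lt (π.matched_symm k l hl) hlk
    have hcard := Finset.card_erase_of_mem hi_mem
    have hpos : 0 < ((Finset.Ico (i:ℕ) m).filter fun m' => wex (wmapF π) m' = false).card :=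
      Finset.card_pos.mpr ⟨_, hi_mem⟩
    have hd := F_diff (wmapF π) (le_of_lt hm1)
    intro hc
    omega
  exact ⟨hij, hwi, hwj, hbal, hmin⟩

lemma elp_right_no_return {π : ELP n} {i : Fin n} (hr : π.role i = PRole.right) :
    ∀ m, (i:ℕ) < m → m ≤ n → F (wmapF π) (i:ℕ) < F (wmapF π) m := by
  intro m hm1 hm2
  have hwi : letterOf π i = false := letterOf_right hr
  have hiw : wex (wmapF π) (i:ℕ) = false := by
    rw [wex_wmapF π _ i.isLt]; simpa [Fin.eta] using hwi
  have hi_mem : (i:ℕ) ∈ (Finset.Ico (i:ℕ) m).filter fun m' => wex (wmapF π) m' = false := by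
    rw [Finset.mem_filter, Finset.mem_Ico]
    exact ⟨⟨le_refl _, hm1⟩, hiw⟩
  have hc1 : ((Finset.Ico (i:ℕ) m).filter fun m' => wex (wmapF π) m' = true).card ≤
      (((Finset.Ico (i:ℕ) m).filter fun m' => wex (wmapF π) m' = false).erase (i:ℕ)).card := by
    apply card_filter_le hm2 true
    intro k hka hkb hkl
    rcases eq_or_lt_of_le hka with he | hlt
    · exfalso
      have hki : k = i := Fin.ext he.symm
      rw [hki, hwi] at hkl
      exact Bool.noConfusion hkl
    · have hik : i < k := hlt
      rcases hrole : π.role k with _ | _ | l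
      · exact absurd (π.left_lt_right k i hrole hr) (by intro hc; have h1 : (k:ℕ) < (i:ℕ) := hc; omega)
      · rw [letterOf_right hrole] at hkl; exact Bool.noConfusion hkl
      · have hsym := π.matched_symm k l hrole
        have hlk : l < k := lt_of_letter_true hrole hkl
        have hli : l ≠ i := by
          intro he
          rw [he] at hsym
          rw [hr] at hsym
          cases hsym
        have hil : i < l := by
          rcases lt_trichotomy l i with h | h | h
          · exfalso
            obtain ⟨l', hl'⟩ := π.nounder l k i hsym h hik
            rw [hr] at hl'
            cases hl'
          · exact absurd h hli
          · exact h
        have hvil : (i:ℕ) < (l:ℕ) := hil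
        have hvlk : (l:ℕ) < (k:ℕ) := hlk
        refine ⟨l, rfl, Finset.mem_erase.mpr ⟨by omega, ?_⟩⟩
        rw [Finset.mem_filter, Finset.mem_Ico]
        refine ⟨⟨by omega, by omega⟩, ?_⟩
        rw [wex_wmapF π _ l.isLt]
        simpa [Fin.eta] using letterOf_matched_lt hsym hlk
  have hcard := Finset.card_erase_of_mem hi_mem
  have hpos : 0 < ((Finset.Ico (i:ℕ) m).filter fun m' => wex (wmapF π) m' = false).card :=
    Finset.card_pos.mpr ⟨_, hi_mem⟩
  have hd := F_diff (wmapF π) (le_of_lt hm1)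
  omega

lemma elp_left_no_preturn {π : ELP n} {i : Fin n} (hr : π.role i = PRole.left) :
    ∀ m, m ≤ (i:ℕ) → F (wmapF π) ((i:ℕ)+1) < F (wmapF π) m := by
  intro m hm
  have hb : (i:ℕ)+1 ≤ n := i.isLt
  have hwi : letterOf π i = true := letterOf_left hr
  have hiw : wex (wmapF π) (i:ℕ) = true := by
    rw [wex_wmapF π _ i.isLt]; simpa [Fin.eta] using hwi
  have hi_mem : (i:ℕ) ∈ (Finset.Ico m ((i:ℕ)+1)).filter fun m' => wex (wmapF π) m' = true := by
    rw [Finset.mem_filter, Finset.mem_Ico]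
    exact ⟨⟨hm, by omega⟩, hiw⟩
  have hc0 : ((Finset.Ico m ((i:ℕ)+1)).filter fun m' => wex (wmapF π) m' = false).card ≤
      (((Finset.Ico m ((i:ℕ)+1)).filter fun m' => wex (wmapF π) m' = true).erase (i:ℕ)).card := by
    apply card_filter_le hb false
    intro k hka hkb hkl
    have hki : k ≠ i := by
      intro he
      rw [he, hwi] at hkl
      exact Bool.noConfusion hkl
    have hik : k < i := by
      rcases lt_trichotomy k i with h | h | h
      · exact h
      · exact absurd h hki
      · exfalso; have : (i:ℕ) < (k:ℕ) := h; omega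
    rcases hrole : π.role k with _ | _ | l
    · rw [letterOf_left hrole] at hkl; exact Bool.noConfusion hkl
    · exact absurd (π.left_lt_right i k hr hrole)
        (by intro hc; have h1 : (i:ℕ) < (k:ℕ) := hc; have h2 : (k:ℕ) < (i:ℕ) := hik; omega)
    · have hsym := π.matched_symm k l hrole
      have hkl' : k < l := lt_of_letter_false hrole hkl
      have hli : l ≠ i := by
        intro he
        rw [he] at hsym
        rw [hr] at hsym
        cases hsym
      have hil : l < i := by
        rcases lt_trichotomy l i with h | h | h
        · exact h
        · exact absurd h hli
        · exfalso
          obtain ⟨l', hl'⟩ := π.nounder k l i hrole hik h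
          rw [hr] at hl'
          cases hl'
      have hvil : (l:ℕ) < (i:ℕ) := hil
      have hvkl : (k:ℕ) < (l:ℕ) := hkl'
      refine ⟨l, rfl, Finset.mem_erase.mpr ⟨by omega, ?_⟩⟩
      rw [Finset.mem_filter, Finset.mem_Ico]
      refine ⟨⟨by omega, by omega⟩, ?_⟩
      rw [wex_wmapF π _ l.isLt]
      simpa [Fin.eta] using letterOf_matched_gt hsym hkl'
  have hcard := Finset.card_erase_of_mem hi_mem
  have hpos : 0 < ((Finset.Ico m ((i:ℕ)+1)).filter fun m' => wex (wmapF π) m' = true).card :=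
    Finset.card_pos.mpr ⟨_, hi_mem⟩
  have hd := F_diff (wmapF π) (show m ≤ (i:ℕ)+1 by omega)
  omega

/-! ### Injectivity -/

lemma role_matched_of {π₁ π₂ : ELP n} (hw : wmapF π₁ = wmapF π₂) {i j : Fin n}
    (hr : π₁.role i = PRole.matched j) (hij : i < j) : π₂.role i = PRole.matched j := by
  have hp : IsPair (wmapF π₂) i j := hw ▸ elp_pair hr hij
  rcases h2 : π₂.role i with _ | _ | j'
  · exfalso
    have h3 := letterOf_left h2
    have h4 : letterOf π₂ i = false := hp.2.1
    rw [h3] at h4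
    exact Bool.noConfusion h4
  · exfalso
    have h3 := elp_right_no_return h2 ((j:ℕ)+1)
      (by have : (i:ℕ) < (j:ℕ) := hij; omega) j.isLt
    rw [hp.2.2.2.1] at h3
    exact lt_irrefl _ h3
  · rcases lt_trichotomy i j' with h | h | h
    · have hj : j' = j := pair_right_unique (elp_pair h2 h) hp
      rw [hj]
    · exact absurd h (π₂.matched_ne i j' h2)
    · exfalso
      have h3 : letterOf π₂ i = true := letterOf_matched_gt h2 h
      have h4 : letterOf π₂ i = false := hp.2.1
      rw [h3] at h4
      exact Bool.noConfusion h4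

lemma role_matched_any {π₁ π₂ : ELP n} (hw : wmapF π₁ = wmapF π₂) {i j : Fin n}
    (hr : π₁.role i = PRole.matched j) : π₂.role i = PRole.matched j := by
  rcases lt_trichotomy i j with h | h | h
  · exact role_matched_of hw hr h
  · exact absurd h (π₁.matched_ne i j hr)
  · have h1 := π₁.matched_symm i j hr
    have h2 := role_matched_of hw h1 h
    exact π₂.matched_symm j i h2

lemma role_eq {π₁ π₂ : ELP n} (hw : wmapF π₁ = wmapF π₂) : π₁.role = π₂.role := by
  funext i
  have hletter : letterOf π₁ i = letterOf π₂ i := congrFun hw i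
  rcases h1 : π₁.role i with _ | _ | j
  · rcases h2 : π₂.role i with _ | _ | j'
    · rfl
    · exfalso
      rw [letterOf_left h1, letterOf_right h2] at hletter
      exact Bool.noConfusion hletter
    · exfalso
      have := role_matched_any hw.symm h2
      rw [h1] at this
      cases this
  · rcases h2 : π₂.role i with _ | _ | j'
    · exfalso
      rw [letterOf_right h1, letterOf_left h2] at hletter
      exact Bool.noConfusion hletter
    · rfl
    · exfalso
      have := role_matched_any hw.symm h2
      rw [h1] at this
      cases this
  · exact (role_matched_any hw h1).symm

lemma elp_ext {π₁ π₂ : ELP n} (h : π₁.role = π₂.role) : π₁ = π₂ := by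
  obtain ⟨r₁, a1, a2, a3, a4, a5⟩ := π₁
  obtain ⟨r₂, b1, b2, b3, b4, b5⟩ := π₂
  have h' : r₁ = r₂ := h
  subst h'
  rfl

end Bij

/-- For every nonnegative integer `n`, the map `w` is a bijection
from the set of extended link patterns on `{1,…,n}` to the set of 01-words of
length `n`. -/
theorem wmap_bijective (n : ℕ) :
    Function.Bijective (fun π : ELP n => wmapL π) := by
  constructor
  · intro π₁ π₂ h
    have hl : List.ofFn (fun i => letterOf π₁ i) = List.ofFn (fun i => letterOf π₂ i) :=
      congrArg Subtype.val h
    have hf : wmapF π₁ = wmapF π₂ := List.ofFn_injective hl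
    exact Bij.elp_ext (Bij.role_eq hf)
  · rintro ⟨l, hl⟩
    subst hl
    refine ⟨Bij.canELP (fun i => l.get i), ?_⟩
    apply Subtype.ext
    show List.ofFn (fun i => letterOf (Bij.canELP (fun i => l.get i)) i) = l
    have h1 : (fun i => letterOf (Bij.canELP (fun i => l.get i)) i) =
        (fun i : Fin l.length => l.get i) := by
      funext i
      exact Bij.letterOf_canELP _ i
    rw [h1, List.ofFn_get]

end
end HFPLpaper2014
end

section
/- Let K, L, M, N be nonnegative integers with K ≤ M+N and N ≤ K+L, and let (l_T,t,r_T;r_B,b,l_B) be a sextuple of 01-words of lengths (K,L,M;N,K+L−N,M+N−K). If there exists an oriented HFPL of size (K,L,M,N) with boundary (l_T,t,r_T;r_B,b,l_B), i.e. if h⃗^{r_B,b,l_B}_{l_T,t,r_T} > 0, then |l_T|_0 + |t|_0 = |r_B|_0 + |b|_0 and |t|_1 + |r_T|_1 = |b|_1 + |l_B|_1. -/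
open scoped Classical

namespace HFPLpaper2014

noncomputable section

/-! ### The graph `H^{K,L,M,N}`, hexagonal fully packed loop configurations and
their oriented versions. -/

/-- vertices of the square lattice -/
abbrev V : Type := ℤ × ℤ

/-- The vertex set of the graph `H^{K,L,M,N}`. -/
def inH (K L M N : ℕ) (p : V) : Prop :=
  p.2 ≤ p.1 ∧ p.2 ≤ (K : ℤ) - 1 ∧ p.2 ≤ -p.1 + 2 * ((K : ℤ) + L) ∧
  -p.1 - 1 ≤ p.2 ∧ (K : ℤ) - M - N ≤ p.2 ∧ p.1 - 2 * ((M : ℤ) + L) - 1 ≤ p.2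

/-- adjacency in the square lattice `ℤ²` -/
def latAdj (p q : V) : Prop :=
  (p.1 = q.1 ∧ (p.2 = q.2 + 1 ∨ q.2 = p.2 + 1)) ∨
  (p.2 = q.2 ∧ (p.1 = q.1 + 1 ∨ q.1 = p.1 + 1))

/-- `L_{T,i+1}`, the leftmost vertex of the `(i+1)`-st (counted from the bottom of the
top `K` rows) row, `0 ≤ i < K`; numbered from left to right. -/
def LTv (i : ℕ) : V := ((i : ℤ), (i : ℤ))

/-- `T_{i+1}`, the odd vertices of the top row, `0 ≤ i < L`. -/
def TTv (K : ℕ) (i : ℕ) : V := ((K : ℤ) + 1 + 2 * i, (K : ℤ) - 1)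

/-- `R_{T,i+1}`, the rightmost vertices of the top `M` rows, `0 ≤ i < M`. -/
def RTv (K L : ℕ) (i : ℕ) : V := ((K : ℤ) + 2 * L + 1 + i, (K : ℤ) - 1 - i)

/-- `L_{B,i+1}`, the leftmost vertices of the bottom `M+N-K` rows, `0 ≤ i < M+N-K`. -/
def LBv (i : ℕ) : V := ((i : ℤ), -(i : ℤ) - 1)

/-- `B_{i+1}`, the even vertices of the bottom row, `0 ≤ i < K+L-N`. -/
def BBv (K M N : ℕ) (i : ℕ) : V := ((M : ℤ) + N - K + 1 + 2 * i, (K : ℤ) - M - N)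

/-- `R_{B,i+1}`, the rightmost vertices of the bottom `N` rows, `0 ≤ i < N`. -/
def RBv (K L M N : ℕ) (i : ℕ) : V := ((M : ℤ) + 2 * L + K - N + 1 + i, (K : ℤ) - M - N + i)

def inLT (K : ℕ) (p : V) : Prop := ∃ i, i < K ∧ p = LTv i
def inTT (K L : ℕ) (p : V) : Prop := ∃ i, i < L ∧ p = TTv K i
def inRT (K L M : ℕ) (p : V) : Prop := ∃ i, i < M ∧ p = RTv K L i
def inLB (K M N : ℕ) (p : V) : Prop := ∃ i, i < M + N - K ∧ p = LBv i
def inBB (K L M N : ℕ) (p : V) : Prop := ∃ i, i < K + L - N ∧ p = BBv K M N i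
def inRB (K L M N : ℕ) (p : V) : Prop := ∃ i, i < N ∧ p = RBv K L M N i

/-- `𝓛_T ∪ 𝓛_B ∪ 𝓡_T ∪ 𝓡_B` -/
def inLRset (K L M N : ℕ) (p : V) : Prop :=
  inLT K p ∨ inLB K M N p ∨ inRT K L M p ∨ inRB K L M N p

/-- `𝓣 ∪ 𝓑` -/
def inTBset (K L M N : ℕ) (p : V) : Prop := inTT K L p ∨ inBB K L M N p

/-- `𝓛_T ∪ 𝓛_B` -/
def inLeft (K M N : ℕ) (p : V) : Prop := inLT K p ∨ inLB K M N p

/-- `𝓡_T ∪ 𝓡_B` -/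
def inRight (K L M N : ℕ) (p : V) : Prop := inRT K L M p ∨ inRB K L M N p

/-- The degree of a vertex `v` in a graph all of whose edges join lattice
neighbours. -/
def ndeg (A : V → V → Prop) (v : V) : ℕ :=
  (({(v.1 + 1, v.2), (v.1 - 1, v.2), (v.1, v.2 + 1), (v.1, v.2 - 1)} : Finset V).filter
    (fun w => A v w)).card

/-- A hexagonal fully packed loop configuration (HFPL) of size `(K,L,M,N)`. -/
structure HFPL (K L M N : ℕ) where
  Adj : V → V → Prop
  symm : ∀ v w, Adj v w → Adj w v
  valid : ∀ v w, Adj v w → inH K L M N v ∧ inH K L M N w ∧ latAdj v w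
  degLR : ∀ v, inLRset K L M N v → ndeg Adj v ≤ 1
  degTB : ∀ v, inTBset K L M N v → ndeg Adj v = 1
  degIn : ∀ v, inH K L M N v → ¬ inLRset K L M N v → ¬ inTBset K L M N v → ndeg Adj v = 2
  noLL : ∀ v w, inLeft K M N v → inLeft K M N w → v ≠ w → ¬ Relation.ReflTransGen Adj v w
  noRR : ∀ v w, inRight K L M N v → inRight K L M N w → v ≠ w → ¬ Relation.ReflTransGen Adj v w

/-- The boundary `(l_T,t,r_T;r_B,b,l_B)` of an HFPL. -/
def Boundary {K L M N : ℕ} (f : HFPL K L M N) (lT t rT rB b lB : Word) : Prop :=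
  (∀ i, i < K → (lT.getD i false = true ↔ ndeg f.Adj (LTv i) = 1)) ∧
  (∀ i, i < L → (t.getD i false = false ↔
     ((∃ w, (inLT K w ∨ inLB K M N w ∨ inBB K L M N w) ∧
        Relation.ReflTransGen f.Adj (TTv K i) w) ∨
      (∃ h, h < i ∧ Relation.ReflTransGen f.Adj (TTv K i) (TTv K h))))) ∧
  (∀ i, i < M → (rT.getD i false = false ↔ ndeg f.Adj (RTv K L i) = 1)) ∧
  (∀ i, i < N → (rB.getD i false = true ↔ ndeg f.Adj (RBv K L M N i) = 1)) ∧
  (∀ i, i < K + L - N → (b.getD i false = false ↔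
     ((∃ w, (inRT K L M w ∨ inRB K L M N w ∨ inTT K L w) ∧
        Relation.ReflTransGen f.Adj (BBv K M N i) w) ∨
      (∃ j, j < K + L - N ∧ i < j ∧
        Relation.ReflTransGen f.Adj (BBv K M N i) (BBv K M N j))))) ∧
  (∀ i, i < M + N - K → (lB.getD i false = false ↔ ndeg f.Adj (LBv i) = 1))

/-- `h^{r_B,b,l_B}_{l_T,t,r_T}`, the number of HFPLs with given boundary. -/
def hord (K L M N : ℕ) (lT t rT rB b lB : Word) : ℕ :=
  Nat.card {f : HFPL K L M N // Boundary f lT t rT rB b lB}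

/-- the undirected graph underlying a directed graph -/
def UAdj (E : V → V → Prop) : V → V → Prop := fun v w => E v w ∨ E w v

def outdeg (E : V → V → Prop) (v : V) : ℕ := ndeg E v
def indeg (E : V → V → Prop) (v : V) : ℕ := ndeg (fun x y => E y x) v

/-- An oriented HFPL of size `(K,L,M,N)`: an HFPL together with an orientation of
each edge such that every degree-2 vertex is incident to one incoming and one
outgoing edge, every edge attached to a vertex of `𝓛_T ∪ 𝓛_B` is outgoing and
every edge attached to a vertex of `𝓡_T ∪ 𝓡_B` is incoming. -/
structure OHFPL (K L M N : ℕ) where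
  E : V → V → Prop
  antisymm : ∀ v w, E v w → ¬ E w v
  valid : ∀ v w, E v w → inH K L M N v ∧ inH K L M N w ∧ latAdj v w
  degLR : ∀ v, inLRset K L M N v → ndeg (UAdj E) v ≤ 1
  degTB : ∀ v, inTBset K L M N v → ndeg (UAdj E) v = 1
  degIn : ∀ v, inH K L M N v → ¬ inLRset K L M N v → ¬ inTBset K L M N v →
    ndeg (UAdj E) v = 2
  noLL : ∀ v w, inLeft K M N v → inLeft K M N w → v ≠ w →
    ¬ Relation.ReflTransGen (UAdj E) v w
  noRR : ∀ v w, inRight K L M N v → inRight K L M N w → v ≠ w →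
    ¬ Relation.ReflTransGen (UAdj E) v w
  flow : ∀ v, ndeg (UAdj E) v = 2 → indeg E v = 1 ∧ outdeg E v = 1
  outL : ∀ v, inLeft K M N v → ∀ w, ¬ E w v
  inRt : ∀ v, inRight K L M N v → ∀ w, ¬ E v w

/-- The boundary `(l_T,t,r_T;r_B,b,l_B)` of an oriented HFPL. -/
def OBoundary {K L M N : ℕ} (f : OHFPL K L M N) (lT t rT rB b lB : Word) : Prop :=
  (∀ i, i < K → (lT.getD i false = true ↔ outdeg f.E (LTv i) = 1)) ∧
  (∀ i, i < L → (t.getD i false = false ↔ indeg f.E (TTv K i) = 1)) ∧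
  (∀ i, i < M → (rT.getD i false = false ↔ indeg f.E (RTv K L i) = 1)) ∧
  (∀ i, i < N → (rB.getD i false = true ↔ indeg f.E (RBv K L M N i) = 1)) ∧
  (∀ i, i < K + L - N → (b.getD i false = true ↔ indeg f.E (BBv K M N i) = 1)) ∧
  (∀ i, i < M + N - K → (lB.getD i false = false ↔ outdeg f.E (LBv i) = 1))

/-- `h⃗^{r_B,b,l_B}_{l_T,t,r_T}`, the number of oriented HFPLs with given boundary. -/
def hvec (K L M N : ℕ) (lT t rT rB b lB : Word) : ℕ :=
  Nat.card {f : OHFPL K L M N // OBoundary f lT t rT rB b lB}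

/-! ### Auxiliary development for Statement 1 -/

section Aux1

/-- counting letters in a word via `getD` -/
lemma count_eq_sum (bv : Bool) (w : Word) :
    w.count bv = ∑ i ∈ Finset.range w.length, (if w.getD i false = bv then 1 else 0) := by
  induction w with
  | nil => simp
  | cons a l ih =>
      rw [List.length_cons, Finset.sum_range_succ']
      simp only [List.getD_cons_succ, List.getD_cons_zero, List.count_cons]
      rw [← ih]
      by_cases h : a = bv <;> simp [h]

lemma count_false_add_count_true (w : Word) : w.count false + w.count true = w.length := by
  induction w with
  | nil => simp
  | cons a l ih => cases a <;> simp [List.count_cons] <;> omega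

/-- the four lattice neighbours of a vertex -/
def N4 (v : V) : Finset V := {(v.1 + 1, v.2), (v.1 - 1, v.2), (v.1, v.2 + 1), (v.1, v.2 - 1)}

lemma ndeg_eq (A : V → V → Prop) (v : V) :
    ndeg A v = ((N4 v).filter (fun w => A v w)).card := rfl

lemma mem_N4_of_latAdj {w v : V} (h : latAdj w v) : w ∈ N4 v := by
  rcases v with ⟨a, b⟩; rcases w with ⟨c, d⟩
  simp only [latAdj] at h
  simp only [N4, Finset.mem_insert, Finset.mem_singleton, Prod.mk.injEq]
  omega

/-- the bounding-box finset realization of the vertex set of `H` -/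
def Sfin (K L M N : ℕ) : Finset V :=
  (Finset.Icc ((-(K:ℤ), (K:ℤ) - M - N) : V) ((2*((K:ℤ)+L+M+N)+2, (K:ℤ)-1) : V)).filter
    (fun p => inH K L M N p)

lemma mem_Sfin {K L M N : ℕ} {p : V} : p ∈ Sfin K L M N ↔ inH K L M N p := by
  rcases p with ⟨x, y⟩
  simp only [Sfin, Finset.mem_filter, Finset.mem_Icc, Prod.mk_le_mk, and_iff_right_iff_imp]
  intro h
  simp only [inH] at h
  omega

variable {K L M N : ℕ}

/-- the (directed) edge set of an oriented HFPL as a finset -/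
def Edg (f : OHFPL K L M N) : Finset (V × V) :=
  (Sfin K L M N ×ˢ Sfin K L M N).filter (fun e => f.E e.1 e.2)

lemma mem_Edg {f : OHFPL K L M N} {e : V × V} : e ∈ Edg f ↔ f.E e.1 e.2 := by
  simp only [Edg, Finset.mem_filter, Finset.mem_product, and_iff_right_iff_imp]
  intro h
  have hv := f.valid _ _ h
  exact ⟨mem_Sfin.mpr hv.1, mem_Sfin.mpr hv.2.1⟩

lemma card_fiber_snd (f : OHFPL K L M N) (v : V) :
    ((Edg f).filter (fun e => e.2 = v)).card = indeg f.E v := by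
  rw [show indeg f.E v = ((N4 v).filter (fun w => f.E w v)).card from rfl]
  apply Finset.card_bij (fun e _ => e.1)
  · intro e he
    simp only [Finset.mem_filter] at he ⊢
    obtain ⟨h1, h2⟩ := he
    rw [mem_Edg] at h1
    subst h2
    exact ⟨mem_N4_of_latAdj (f.valid _ _ h1).2.2, h1⟩
  · intro e1 h1 e2 h2 h
    simp only [Finset.mem_filter] at h1 h2
    exact Prod.ext h (h1.2.trans h2.2.symm)
  · intro w hw
    simp only [Finset.mem_filter] at hw
    exact ⟨(w, v), by simp [Finset.mem_filter, mem_Edg, hw.2], rfl⟩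

lemma card_fiber_fst (f : OHFPL K L M N) (v : V) :
    ((Edg f).filter (fun e => e.1 = v)).card = outdeg f.E v := by
  rw [show outdeg f.E v = ((N4 v).filter (fun w => f.E v w)).card from rfl]
  apply Finset.card_bij (fun e _ => e.2)
  · intro e he
    simp only [Finset.mem_filter] at he ⊢
    obtain ⟨h1, h2⟩ := he
    rw [mem_Edg] at h1
    subst h2
    have := (f.valid _ _ h1).2.2
    refine ⟨mem_N4_of_latAdj ?_, h1⟩
    rcases this with ⟨h, h'⟩ | ⟨h, h'⟩
    · exact Or.inl ⟨h.symm, h'.symm⟩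
    · exact Or.inr ⟨h.symm, h'.symm⟩
  · intro e1 h1 e2 h2 h
    simp only [Finset.mem_filter] at h1 h2
    exact Prod.ext (h1.2.trans h2.2.symm) h
  · intro w hw
    simp only [Finset.mem_filter] at hw
    exact ⟨(v, w), by simp [Finset.mem_filter, mem_Edg, hw.2], rfl⟩

lemma sum_indeg (f : OHFPL K L M N) (P : V → Prop) [DecidablePred P] :
    ∑ v ∈ (Sfin K L M N).filter P, indeg f.E v
      = ((Edg f).filter (fun e => P e.2)).card := by
  rw [Finset.card_eq_sum_card_fiberwise
    (f := fun e : V × V => e.2) (t := (Sfin K L M N).filter P)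
    (fun e he => by
      simp only [Finset.mem_coe, Finset.mem_filter] at he ⊢
      exact ⟨mem_Sfin.mpr (f.valid _ _ (mem_Edg.mp he.1)).2.1, he.2⟩)]
  refine Finset.sum_congr rfl (fun v hv => ?_)
  rw [← card_fiber_snd f v]
  congr 1
  rw [Finset.filter_filter]
  apply Finset.filter_congr
  intro e _
  simp only [Finset.mem_filter] at hv
  constructor
  · exact fun h => ⟨by rw [h]; exact hv.2, h⟩
  · exact fun h => h.2

lemma sum_outdeg (f : OHFPL K L M N) (P : V → Prop) [DecidablePred P] :
    ∑ v ∈ (Sfin K L M N).filter P, outdeg f.E v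
      = ((Edg f).filter (fun e => P e.1)).card := by
  rw [Finset.card_eq_sum_card_fiberwise
    (f := fun e : V × V => e.1) (t := (Sfin K L M N).filter P)
    (fun e he => by
      simp only [Finset.mem_coe, Finset.mem_filter] at he ⊢
      exact ⟨mem_Sfin.mpr (f.valid _ _ (mem_Edg.mp he.1)).1, he.2⟩)]
  refine Finset.sum_congr rfl (fun v hv => ?_)
  rw [← card_fiber_fst f v]
  congr 1
  rw [Finset.filter_filter]
  apply Finset.filter_congr
  intro e _
  simp only [Finset.mem_filter] at hv
  constructor
  · exact fun h => ⟨by rw [h]; exact hv.2, h⟩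
  · exact fun h => h.2

lemma deg_split (f : OHFPL K L M N) (v : V) :
    indeg f.E v + outdeg f.E v = ndeg (UAdj f.E) v := by
  have : ((N4 v).filter (fun w => UAdj f.E v w))
      = ((N4 v).filter (fun w => f.E w v)) ∪ ((N4 v).filter (fun w => f.E v w)) := by
    rw [← Finset.filter_or]
    apply Finset.filter_congr
    intro w _
    unfold UAdj
    tauto
  rw [show ndeg (UAdj f.E) v = ((N4 v).filter (fun w => UAdj f.E v w)).card from rfl, this,
    Finset.card_union_of_disjoint]
  · rfl
  · rw [Finset.disjoint_left]
    intro w h1 h2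
    simp only [Finset.mem_filter] at h1 h2
    exact f.antisymm _ _ h2.2 h1.2

lemma edge_parity (f : OHFPL K L M N) {e : V × V} (he : e ∈ Edg f) :
    (Even (e.2.1 + e.2.2) ↔ ¬ Even (e.1.1 + e.1.2)) := by
  have h := (f.valid _ _ (mem_Edg.mp he)).2.2
  rcases e with ⟨⟨a, b⟩, ⟨c, d⟩⟩
  simp only [latAdj] at h
  simp only [Int.even_iff] at *
  omega

end Aux1


section Aux2

variable {K L M N : ℕ}

lemma inH_of_deg (f : OHFPL K L M N) {v : V} (h : ndeg (UAdj f.E) v = 1) :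
    inH K L M N v := by
  by_contra hv
  rw [ndeg_eq] at h
  rw [Finset.filter_eq_empty_iff.mpr ?_] at h
  · simp at h
  · intro w _ hw
    rcases hw with h1 | h2
    · exact hv (f.valid _ _ h1).1
    · exact hv (f.valid _ _ h2).2.1

lemma inH_LTv (hKMN : K ≤ M + N) {i : ℕ} (hi : i < K) : inH K L M N (LTv i) := by
  simp only [inH, LTv]; omega

lemma inH_RTv {i : ℕ} (hi : i < M) : inH K L M N (RTv K L i) := by
  simp only [inH, RTv]; omega

lemma inH_LBv (hNKL : N ≤ K + L) {i : ℕ} (hi : i < M + N - K) : inH K L M N (LBv i) := by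
  simp only [inH, LBv]; omega

lemma inH_RBv (hNKL : N ≤ K + L) {i : ℕ} (hi : i < N) : inH K L M N (RBv K L M N i) := by
  simp only [inH, RBv]; omega

lemma inH_TTv (f : OHFPL K L M N) {i : ℕ} (hi : i < L) : inH K L M N (TTv K i) :=
  inH_of_deg f (f.degTB _ (Or.inl ⟨i, hi, rfl⟩))

lemma inH_BBv (f : OHFPL K L M N) {i : ℕ} (hi : i < K + L - N) :
    inH K L M N (BBv K M N i) :=
  inH_of_deg f (f.degTB _ (Or.inr ⟨i, hi, rfl⟩))

lemma indeg_left (f : OHFPL K L M N) {v : V} (hv : inLeft K M N v) :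
    indeg f.E v = 0 := by
  rw [show indeg f.E v = ((N4 v).filter (fun w => f.E w v)).card from rfl]
  rw [Finset.card_eq_zero, Finset.filter_eq_empty_iff]
  exact fun w _ hw => f.outL v hv w hw

lemma outdeg_right (f : OHFPL K L M N) {v : V} (hv : inRight K L M N v) :
    outdeg f.E v = 0 := by
  rw [show outdeg f.E v = ((N4 v).filter (fun w => f.E v w)).card from rfl]
  rw [Finset.card_eq_zero, Finset.filter_eq_empty_iff]
  exact fun w _ hw => f.inRt v hv w hw

variable {lTw tw rTw rBw bw lBw : Word}

lemma outdeg_LTv (f : OHFPL K L M N) (hbd : OBoundary f lTw tw rTw rBw bw lBw)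
    {i : ℕ} (hi : i < K) :
    outdeg f.E (LTv i) = if lTw.getD i false = true then 1 else 0 := by
  have h1 := hbd.1 i hi
  have h2 := deg_split f (LTv i)
  have h3 := f.degLR (LTv i) (Or.inl ⟨i, hi, rfl⟩)
  by_cases h : lTw.getD i false = true
  · rw [if_pos h, h1.mp h]
  · rw [if_neg h]
    have h4 : outdeg f.E (LTv i) ≠ 1 := fun hc => h (h1.mpr hc)
    omega

lemma indeg_TTv (f : OHFPL K L M N) (hbd : OBoundary f lTw tw rTw rBw bw lBw)
    {i : ℕ} (hi : i < L) :
    indeg f.E (TTv K i) = if tw.getD i false = false then 1 else 0 := by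
  have h1 := hbd.2.1 i hi
  by_cases h : tw.getD i false = false
  · rw [if_pos h, h1.mp h]
  · rw [if_neg h]
    have h2 := deg_split f (TTv K i)
    have h3 := f.degTB (TTv K i) (Or.inl ⟨i, hi, rfl⟩)
    have h4 : indeg f.E (TTv K i) ≠ 1 := fun hc => h (h1.mpr hc)
    omega

lemma outdeg_TTv (f : OHFPL K L M N) (hbd : OBoundary f lTw tw rTw rBw bw lBw)
    {i : ℕ} (hi : i < L) :
    outdeg f.E (TTv K i) = if tw.getD i false = true then 1 else 0 := by
  have h1 := indeg_TTv f hbd hi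
  have h2 := deg_split f (TTv K i)
  have h3 := f.degTB (TTv K i) (Or.inl ⟨i, hi, rfl⟩)
  rcases Bool.eq_false_or_eq_true (tw.getD i false) with hval | hval
  · rw [if_pos hval]
    rw [if_neg (by rw [hval]; simp)] at h1
    omega
  · rw [if_neg (by rw [hval]; simp)]
    rw [if_pos hval] at h1
    omega

lemma indeg_RTv (f : OHFPL K L M N) (hbd : OBoundary f lTw tw rTw rBw bw lBw)
    {i : ℕ} (hi : i < M) :
    indeg f.E (RTv K L i) = if rTw.getD i false = false then 1 else 0 := by
  have h1 := hbd.2.2.1 i hi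
  by_cases h : rTw.getD i false = false
  · rw [if_pos h, h1.mp h]
  · rw [if_neg h]
    have h2 := deg_split f (RTv K L i)
    have h3 := f.degLR (RTv K L i) (Or.inr (Or.inr (Or.inl ⟨i, hi, rfl⟩)))
    have h4 : indeg f.E (RTv K L i) ≠ 1 := fun hc => h (h1.mpr hc)
    omega

lemma indeg_RBv (f : OHFPL K L M N) (hbd : OBoundary f lTw tw rTw rBw bw lBw)
    {i : ℕ} (hi : i < N) :
    indeg f.E (RBv K L M N i) = if rBw.getD i false = true then 1 else 0 := by
  have h1 := hbd.2.2.2.1 i hi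
  by_cases h : rBw.getD i false = true
  · rw [if_pos h, h1.mp h]
  · rw [if_neg h]
    have h2 := deg_split f (RBv K L M N i)
    have h3 := f.degLR (RBv K L M N i) (Or.inr (Or.inr (Or.inr ⟨i, hi, rfl⟩)))
    have h4 : indeg f.E (RBv K L M N i) ≠ 1 := fun hc => h (h1.mpr hc)
    omega

lemma outdeg_LBv (f : OHFPL K L M N) (hbd : OBoundary f lTw tw rTw rBw bw lBw)
    {i : ℕ} (hi : i < M + N - K) :
    outdeg f.E (LBv i) = if lBw.getD i false = false then 1 else 0 := by
  have h1 := hbd.2.2.2.2.2 i hi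
  by_cases h : lBw.getD i false = false
  · rw [if_pos h, h1.mp h]
  · rw [if_neg h]
    have h2 := deg_split f (LBv i)
    have h3 := f.degLR (LBv i) (Or.inr (Or.inl ⟨i, hi, rfl⟩))
    have h4 : outdeg f.E (LBv i) ≠ 1 := fun hc => h (h1.mpr hc)
    omega

lemma indeg_BBv (f : OHFPL K L M N) (hbd : OBoundary f lTw tw rTw rBw bw lBw)
    {i : ℕ} (hi : i < K + L - N) :
    indeg f.E (BBv K M N i) = if bw.getD i false = true then 1 else 0 := by
  have h1 := hbd.2.2.2.2.1 i hi
  by_cases h : bw.getD i false = true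
  · rw [if_pos h, h1.mp h]
  · rw [if_neg h]
    have h2 := deg_split f (BBv K M N i)
    have h3 := f.degTB (BBv K M N i) (Or.inr ⟨i, hi, rfl⟩)
    have h4 : indeg f.E (BBv K M N i) ≠ 1 := fun hc => h (h1.mpr hc)
    omega

lemma outdeg_BBv (f : OHFPL K L M N) (hbd : OBoundary f lTw tw rTw rBw bw lBw)
    {i : ℕ} (hi : i < K + L - N) :
    outdeg f.E (BBv K M N i) = if bw.getD i false = false then 1 else 0 := by
  have h1 := indeg_BBv f hbd hi
  have h2 := deg_split f (BBv K M N i)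
  have h3 := f.degTB (BBv K M N i) (Or.inr ⟨i, hi, rfl⟩)
  rcases Bool.eq_false_or_eq_true (bw.getD i false) with hval | hval
  · rw [if_neg (by rw [hval]; simp)]
    rw [if_pos hval] at h1
    omega
  · rw [if_pos hval]
    rw [if_neg (by rw [hval]; simp)] at h1
    omega

end Aux2

section Aux3

variable {K L M N : ℕ}

def LTs (K : ℕ) : Finset V := (Finset.range K).image LTv
def TTs (K L : ℕ) : Finset V := (Finset.range L).image (TTv K)
def RTs (K L M : ℕ) : Finset V := (Finset.range M).image (RTv K L)
def LBs (K M N : ℕ) : Finset V := (Finset.range (M + N - K)).image LBv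
def BBs (K L M N : ℕ) : Finset V := (Finset.range (K + L - N)).image (BBv K M N)
def RBs (K L M N : ℕ) : Finset V := (Finset.range N).image (RBv K L M N)

lemma disj_LT_TT : Disjoint (LTs K) (TTs K L) := by
  rw [Finset.disjoint_left]
  rintro v h1 h2
  simp only [LTs, TTs, Finset.mem_image, Finset.mem_range] at h1 h2
  obtain ⟨i, hi, rfl⟩ := h1
  obtain ⟨j, hj, hEq⟩ := h2
  simp only [LTv, TTv, Prod.ext_iff] at hEq
  omega

lemma disj_LT_RT : Disjoint (LTs K) (RTs K L M) := by
  rw [Finset.disjoint_left]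
  rintro v h1 h2
  simp only [LTs, RTs, Finset.mem_image, Finset.mem_range] at h1 h2
  obtain ⟨i, hi, rfl⟩ := h1
  obtain ⟨j, hj, hEq⟩ := h2
  simp only [LTv, RTv, Prod.ext_iff] at hEq
  omega

lemma disj_TT_RT : Disjoint (TTs K L) (RTs K L M) := by
  rw [Finset.disjoint_left]
  rintro v h1 h2
  simp only [TTs, RTs, Finset.mem_image, Finset.mem_range] at h1 h2
  obtain ⟨i, hi, rfl⟩ := h1
  obtain ⟨j, hj, hEq⟩ := h2
  simp only [TTv, RTv, Prod.ext_iff] at hEq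
  omega

lemma disj_LB_BB : Disjoint (LBs K M N) (BBs K L M N) := by
  rw [Finset.disjoint_left]
  rintro v h1 h2
  simp only [LBs, BBs, Finset.mem_image, Finset.mem_range] at h1 h2
  obtain ⟨i, hi, rfl⟩ := h1
  obtain ⟨j, hj, hEq⟩ := h2
  simp only [LBv, BBv, Prod.ext_iff] at hEq
  omega

lemma disj_LB_RB (hNKL : N ≤ K + L) : Disjoint (LBs K M N) (RBs K L M N) := by
  rw [Finset.disjoint_left]
  rintro v h1 h2
  simp only [LBs, RBs, Finset.mem_image, Finset.mem_range] at h1 h2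
  obtain ⟨i, hi, rfl⟩ := h1
  obtain ⟨j, hj, hEq⟩ := h2
  simp only [LBv, RBv, Prod.ext_iff] at hEq
  omega

lemma disj_BB_RB : Disjoint (BBs K L M N) (RBs K L M N) := by
  rw [Finset.disjoint_left]
  rintro v h1 h2
  simp only [BBs, RBs, Finset.mem_image, Finset.mem_range] at h1 h2
  obtain ⟨i, hi, rfl⟩ := h1
  obtain ⟨j, hj, hEq⟩ := h2
  simp only [BBv, RBv, Prod.ext_iff] at hEq
  omega

lemma black_special_eq (f : OHFPL K L M N) (hKMN : K ≤ M + N) :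
    ((Sfin K L M N).filter (fun v => Even (v.1 + v.2))).filter
        (fun v => inLRset K L M N v ∨ inTBset K L M N v)
      = (LTs K ∪ TTs K L) ∪ RTs K L M := by
  ext v
  simp only [Finset.mem_filter, Finset.mem_union, LTs, TTs, RTs, Finset.mem_image,
    Finset.mem_range, mem_Sfin]
  simp only [inLRset, inTBset, inLT, inLB, inRT, inRB, inTT, inBB]
  constructor
  · rintro ⟨⟨hH, hEv⟩, (⟨i, hi, rfl⟩ | ⟨i, hi, rfl⟩ | ⟨i, hi, rfl⟩ | ⟨i, hi, rfl⟩) |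
      (⟨i, hi, rfl⟩ | ⟨i, hi, rfl⟩)⟩
    · exact Or.inl (Or.inl ⟨i, hi, rfl⟩)
    · exfalso; simp only [LBv, Int.even_iff] at hEv; omega
    · exact Or.inr ⟨i, hi, rfl⟩
    · exfalso; simp only [RBv, Int.even_iff] at hEv; omega
    · exact Or.inl (Or.inr ⟨i, hi, rfl⟩)
    · exfalso; simp only [BBv, Int.even_iff] at hEv; omega
  · rintro ((⟨i, hi, rfl⟩ | ⟨i, hi, rfl⟩) | ⟨i, hi, rfl⟩)
    · exact ⟨⟨inH_LTv hKMN hi, by simp only [LTv, Int.even_iff]; omega⟩,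
        Or.inl (Or.inl ⟨i, hi, rfl⟩)⟩
    · exact ⟨⟨inH_TTv f hi, by simp only [TTv, Int.even_iff]; omega⟩,
        Or.inr (Or.inl ⟨i, hi, rfl⟩)⟩
    · exact ⟨⟨inH_RTv hi, by simp only [RTv, Int.even_iff]; omega⟩,
        Or.inl (Or.inr (Or.inr (Or.inl ⟨i, hi, rfl⟩)))⟩

lemma white_special_eq (f : OHFPL K L M N) (hNKL : N ≤ K + L) :
    ((Sfin K L M N).filter (fun v => ¬ Even (v.1 + v.2))).filter
        (fun v => inLRset K L M N v ∨ inTBset K L M N v)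
      = (LBs K M N ∪ BBs K L M N) ∪ RBs K L M N := by
  ext v
  simp only [Finset.mem_filter, Finset.mem_union, LBs, BBs, RBs, Finset.mem_image,
    Finset.mem_range, mem_Sfin]
  simp only [inLRset, inTBset, inLT, inLB, inRT, inRB, inTT, inBB]
  constructor
  · rintro ⟨⟨hH, hEv⟩, (⟨i, hi, rfl⟩ | ⟨i, hi, rfl⟩ | ⟨i, hi, rfl⟩ | ⟨i, hi, rfl⟩) |
      (⟨i, hi, rfl⟩ | ⟨i, hi, rfl⟩)⟩
    · exfalso; exact hEv (by simp only [LTv, Int.even_iff]; omega)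
    · exact Or.inl (Or.inl ⟨i, hi, rfl⟩)
    · exfalso; exact hEv (by simp only [RTv, Int.even_iff]; omega)
    · exact Or.inr ⟨i, hi, rfl⟩
    · exfalso; exact hEv (by simp only [TTv, Int.even_iff]; omega)
    · exact Or.inl (Or.inr ⟨i, hi, rfl⟩)
  · rintro ((⟨i, hi, rfl⟩ | ⟨i, hi, rfl⟩) | ⟨i, hi, rfl⟩)
    · exact ⟨⟨inH_LBv hNKL hi, by simp only [LBv, Int.even_iff]; omega⟩,
        Or.inl (Or.inr (Or.inl ⟨i, hi, rfl⟩))⟩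
    · exact ⟨⟨inH_BBv f hi, by simp only [BBv, Int.even_iff]; omega⟩,
        Or.inr (Or.inr ⟨i, hi, rfl⟩)⟩
    · exact ⟨⟨inH_RBv hNKL hi, by simp only [RBv, Int.even_iff]; omega⟩,
        Or.inl (Or.inr (Or.inr (Or.inr ⟨i, hi, rfl⟩)))⟩


lemma injOn_LTv : Set.InjOn LTv (Finset.range K : Set ℕ) := by
  intro x _ y _ h; simp only [LTv, Prod.ext_iff] at h; omega

lemma injOn_TTv : Set.InjOn (TTv K) (Finset.range L : Set ℕ) := by
  intro x _ y _ h; simp only [TTv, Prod.ext_iff] at h; omega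

lemma injOn_RTv : Set.InjOn (RTv K L) (Finset.range M : Set ℕ) := by
  intro x _ y _ h; simp only [RTv, Prod.ext_iff] at h; omega

lemma injOn_LBv : Set.InjOn LBv (Finset.range (M + N - K) : Set ℕ) := by
  intro x _ y _ h; simp only [LBv, Prod.ext_iff] at h; omega

lemma injOn_BBv : Set.InjOn (BBv K M N) (Finset.range (K + L - N) : Set ℕ) := by
  intro x _ y _ h; simp only [BBv, Prod.ext_iff] at h; omega

lemma injOn_RBv : Set.InjOn (RBv K L M N) (Finset.range N : Set ℕ) := by
  intro x _ y _ h; simp only [RBv, Prod.ext_iff] at h; omega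

lemma card_black_special : ((LTs K ∪ TTs K L) ∪ RTs K L M).card = K + L + M := by
  rw [Finset.card_union_of_disjoint (Finset.disjoint_union_left.mpr ⟨disj_LT_RT, disj_TT_RT⟩),
    Finset.card_union_of_disjoint disj_LT_TT]
  rw [LTs, TTs, RTs, Finset.card_image_of_injOn injOn_LTv,
    Finset.card_image_of_injOn injOn_TTv, Finset.card_image_of_injOn injOn_RTv]
  simp

lemma card_white_special (hNKL : N ≤ K + L) :
    ((LBs K M N ∪ BBs K L M N) ∪ RBs K L M N).card = (M + N - K) + (K + L - N) + N := by
  rw [Finset.card_union_of_disjoint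
      (Finset.disjoint_union_left.mpr ⟨disj_LB_RB hNKL, disj_BB_RB⟩),
    Finset.card_union_of_disjoint disj_LB_BB]
  rw [LBs, BBs, RBs, Finset.card_image_of_injOn injOn_LBv,
    Finset.card_image_of_injOn injOn_BBv, Finset.card_image_of_injOn injOn_RBv]
  simp

end Aux3


section Aux4

/-- `+1` on even integers, `-1` on odd ones -/
def gpar (x : ℤ) : ℤ := if Even x then 1 else -1

lemma sum_gpar_Icc (c : ℤ) : ∀ (n : ℕ) (a : ℤ),
    ∑ x ∈ Finset.Icc a (a + (n : ℤ)), gpar (x + c)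
      = if Even n then gpar (a + c) else 0 := by
  intro n
  induction n with
  | zero => intro a; simp
  | succ n ih =>
      intro a
      have hcast : ((n + 1 : ℕ) : ℤ) = (n : ℤ) + 1 := by push_cast; ring
      have hins : Finset.Icc a (a + ((n : ℤ) + 1))
          = insert (a + (n : ℤ) + 1) (Finset.Icc a (a + (n : ℤ))) := by
        ext z; simp only [Finset.mem_Icc, Finset.mem_insert]; omega
      rw [hcast, hins, Finset.sum_insert (by simp only [Finset.mem_Icc]; omega), ih a]
      simp only [gpar]
      split_ifs with h1 h2 h3 h4 h5 h6 h7 h8 <;>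
        simp only [Int.even_iff, Nat.even_iff] at * <;> omega

lemma row_sum (c a b : ℤ) (hab : a ≤ b) :
    ∑ x ∈ Finset.Icc a b, gpar (x + c) = if Even (b - a) then gpar (a + c) else 0 := by
  obtain ⟨n, hn⟩ : ∃ n : ℕ, b = a + n := ⟨(b - a).toNat, by omega⟩
  subst hn
  rw [sum_gpar_Icc]
  have h : Even (a + (n : ℤ) - a) ↔ Even n := by
    rw [show a + (n : ℤ) - a = (n : ℤ) by ring, Int.even_coe_nat]
  by_cases he : Even n
  · rw [if_pos he, if_pos (h.mpr he)]
  · rw [if_neg he, if_neg (fun hc => he (h.mp hc))]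

variable {K L M N : ℕ}

lemma parity_count (hKMN : K ≤ M + N) (hNKL : N ≤ K + L) :
    ((Sfin K L M N).filter (fun v => Even (v.1 + v.2))).card + N
      = ((Sfin K L M N).filter (fun v => ¬ Even (v.1 + v.2))).card + K := by
  have hsplit : ∑ v ∈ Sfin K L M N, gpar (v.1 + v.2)
      = (((Sfin K L M N).filter (fun v => Even (v.1 + v.2))).card : ℤ)
        - (((Sfin K L M N).filter (fun v => ¬ Even (v.1 + v.2))).card : ℤ) := by
    rw [← Finset.sum_filter_add_sum_filter_not (Sfin K L M N) (fun v => Even (v.1 + v.2))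
      (fun v => gpar (v.1 + v.2))]
    have h1 : ∑ v ∈ (Sfin K L M N).filter (fun v => Even (v.1 + v.2)), gpar (v.1 + v.2)
        = (((Sfin K L M N).filter (fun v => Even (v.1 + v.2))).card : ℤ) := by
      rw [Finset.sum_congr rfl (fun v hv => show gpar (v.1 + v.2) = (1 : ℤ) by
        simp only [Finset.mem_filter] at hv; simp [gpar, hv.2])]
      simp
    have h2 : ∑ v ∈ (Sfin K L M N).filter (fun v => ¬ Even (v.1 + v.2)), gpar (v.1 + v.2)
        = -(((Sfin K L M N).filter (fun v => ¬ Even (v.1 + v.2))).card : ℤ) := by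
      rw [Finset.sum_congr rfl (fun v hv => show gpar (v.1 + v.2) = (-1 : ℤ) by
        simp only [Finset.mem_filter] at hv; simp [gpar, hv.2])]
      simp
    rw [h1, h2]; ring
  have hfib : ∑ v ∈ Sfin K L M N, gpar (v.1 + v.2)
      = ∑ y ∈ Finset.Icc ((K:ℤ) - M - N) ((K:ℤ) - 1),
          ∑ v ∈ (Sfin K L M N).filter (fun v => v.2 = y), gpar (v.1 + v.2) := by
    refine (Finset.sum_fiberwise_of_maps_to (fun v hv => ?_) _).symm
    have := mem_Sfin.mp hv
    simp only [inH] at this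
    simp only [Finset.mem_Icc]
    omega
  have hrow : ∀ y ∈ Finset.Icc ((K:ℤ) - M - N) ((K:ℤ) - 1),
      (Sfin K L M N).filter (fun v => v.2 = y)
        = (Finset.Icc (max y (-y - 1))
            (min (-y + 2*((K:ℤ) + L)) (y + 2*((M:ℤ) + L) + 1))).image (fun x => (x, y)) := by
    intro y hy
    simp only [Finset.mem_Icc] at hy
    ext p
    rcases p with ⟨x, y'⟩
    simp only [Finset.mem_filter, mem_Sfin, inH, Finset.mem_image, Finset.mem_Icc,
      Prod.mk.injEq, max_le_iff, le_min_iff]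
    constructor
    · rintro ⟨⟨h1, h2, h3, h4, h5, h6⟩, rfl⟩
      exact ⟨x, ⟨⟨h1, by omega⟩, by omega, by omega⟩, rfl, rfl⟩
    · rintro ⟨x', ⟨⟨ha1, ha2⟩, hb1, hb2⟩, rfl, rfl⟩
      refine ⟨⟨?_, ?_, ?_, ?_, ?_, ?_⟩, rfl⟩ <;> omega
  have hval : ∀ y ∈ Finset.Icc ((K:ℤ) - M - N) ((K:ℤ) - 1),
      ∑ v ∈ (Sfin K L M N).filter (fun v => v.2 = y), gpar (v.1 + v.2)
        = (if 0 ≤ y ∧ (K:ℤ) - M ≤ y then (1:ℤ) else 0)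
          - (if y < 0 ∧ y < (K:ℤ) - M then (1:ℤ) else 0) := by
    intro y hy
    rw [hrow y hy, Finset.sum_image (fun x1 _ x2 _ h => by simpa using h)]
    simp only [Finset.mem_Icc] at hy
    rcases le_or_gt 0 y with hy0 | hy0 <;> rcases le_or_gt ((K:ℤ) - M) y with hyKM | hyKM
    · rw [max_eq_left (by omega), min_eq_left (by omega), row_sum _ _ _ (by omega),
        if_pos (by rw [Int.even_iff]; omega)]
      simp only [gpar]
      rw [if_pos ⟨y, by ring⟩, if_pos ⟨hy0, hyKM⟩, if_neg (by omega)]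
      norm_num
    · rw [max_eq_left (by omega), min_eq_right (by omega), row_sum _ _ _ (by omega),
        if_neg (by rw [Int.even_iff]; omega), if_neg (by omega), if_neg (by omega)]
      norm_num
    · rw [max_eq_right (by omega), min_eq_left (by omega), row_sum _ _ _ (by omega),
        if_neg (by rw [Int.even_iff]; omega), if_neg (by omega), if_neg (by omega)]
      norm_num
    · rw [max_eq_right (by omega), min_eq_right (by omega), row_sum _ _ _ (by omega),
        if_pos (by rw [Int.even_iff]; omega)]
      simp only [gpar]
      rw [if_neg (by rw [Int.even_iff]; omega), if_neg (by omega), if_pos ⟨hy0, hyKM⟩]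
      norm_num
  have e1 : (Finset.Icc ((K:ℤ) - M - N) ((K:ℤ) - 1)).filter
        (fun y => 0 ≤ y ∧ (K:ℤ) - M ≤ y)
      = Finset.Icc (max 0 ((K:ℤ) - M)) ((K:ℤ) - 1) := by
    ext z
    simp only [Finset.mem_filter, Finset.mem_Icc, max_le_iff]
    omega
  have e2 : (Finset.Icc ((K:ℤ) - M - N) ((K:ℤ) - 1)).filter
        (fun y => y < 0 ∧ y < (K:ℤ) - M)
      = Finset.Icc ((K:ℤ) - M - N) (min (-1) ((K:ℤ) - M - 1)) := by
    ext z
    simp only [Finset.mem_filter, Finset.mem_Icc, le_min_iff]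
    omega
  have key : (((Sfin K L M N).filter (fun v => Even (v.1 + v.2))).card : ℤ)
      - (((Sfin K L M N).filter (fun v => ¬ Even (v.1 + v.2))).card : ℤ) = (K:ℤ) - N := by
    rw [← hsplit, hfib, Finset.sum_congr rfl hval, Finset.sum_sub_distrib,
      Finset.sum_boole, Finset.sum_boole, e1, e2, Int.card_Icc, Int.card_Icc]
    rcases le_total ((K:ℤ) - M) 0 with h | h
    · rw [max_eq_left h, min_eq_right (by omega)]
      omega
    · rw [max_eq_right h, min_eq_left (by omega)]
      omega
  omega

end Aux4

/-- If there exists an oriented HFPL of size `(K,L,M,N)` with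
boundary `(l_T,t,r_T;r_B,b,l_B)`, then `|l_T|₀ + |t|₀ = |r_B|₀ + |b|₀` and
`|t|₁ + |r_T|₁ = |b|₁ + |l_B|₁`. -/
theorem oriented_HFPL_boundary_counts
    (K L M N : ℕ) (hKMN : K ≤ M + N) (hNKL : N ≤ K + L)
    (lT t rT rB b lB : Word)
    (hlT : lT.length = K) (ht : t.length = L) (hrT : rT.length = M)
    (hrB : rB.length = N) (hb : b.length = K + L - N) (hlB : lB.length = M + N - K)
    (hpos : 0 < hvec K L M N lT t rT rB b lB) :
    c0 lT + c0 t = c0 rB + c0 b ∧ c1 t + c1 rT = c1 b + c1 lB := by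
  obtain ⟨⟨⟨f, hbd⟩⟩, -⟩ := Nat.card_ne_zero.mp (Nat.pos_iff_ne_zero.mp hpos)
  -- internal sums equal cardinalities
  have hflow : ∀ v ∈ Sfin K L M N, ¬(inLRset K L M N v ∨ inTBset K L M N v) →
      indeg f.E v = 1 ∧ outdeg f.E v = 1 := fun v hv hns =>
    f.flow v (f.degIn v (mem_Sfin.mp hv) (fun hc => hns (Or.inl hc))
      (fun hc => hns (Or.inr hc)))
  -- sums over the special (boundary) vertices
  have hBspecIn : ∑ v ∈ ((Sfin K L M N).filter (fun v => Even (v.1 + v.2))).filter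
        (fun v => inLRset K L M N v ∨ inTBset K L M N v), indeg f.E v = c0 t + c0 rT := by
    rw [black_special_eq f hKMN,
      Finset.sum_union (Finset.disjoint_union_left.mpr ⟨disj_LT_RT, disj_TT_RT⟩),
      Finset.sum_union disj_LT_TT, LTs, TTs, RTs,
      Finset.sum_image (fun x hx y hy h =>
        injOn_LTv (Finset.mem_coe.mpr hx) (Finset.mem_coe.mpr hy) h),
      Finset.sum_image (fun x hx y hy h =>
        injOn_TTv (Finset.mem_coe.mpr hx) (Finset.mem_coe.mpr hy) h),
      Finset.sum_image (fun x hx y hy h =>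
        injOn_RTv (Finset.mem_coe.mpr hx) (Finset.mem_coe.mpr hy) h)]
    have s1 : ∑ i ∈ Finset.range K, indeg f.E (LTv i) = 0 :=
      Finset.sum_eq_zero (fun i hi =>
        indeg_left f (Or.inl ⟨i, Finset.mem_range.mp hi, rfl⟩))
    have s2 : ∑ i ∈ Finset.range L, indeg f.E (TTv K i) = c0 t := by
      rw [Finset.sum_congr rfl
        (fun i hi => indeg_TTv f hbd (Finset.mem_range.mp hi))]
      simp only [c0]
      rw [count_eq_sum false t, ht]
    have s3 : ∑ i ∈ Finset.range M, indeg f.E (RTv K L i) = c0 rT := by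
      rw [Finset.sum_congr rfl
        (fun i hi => indeg_RTv f hbd (Finset.mem_range.mp hi))]
      simp only [c0]
      rw [count_eq_sum false rT, hrT]
    rw [s1, s2, s3]
    omega
  have hBspecOut : ∑ v ∈ ((Sfin K L M N).filter (fun v => Even (v.1 + v.2))).filter
        (fun v => inLRset K L M N v ∨ inTBset K L M N v), outdeg f.E v = c1 lT + c1 t := by
    rw [black_special_eq f hKMN,
      Finset.sum_union (Finset.disjoint_union_left.mpr ⟨disj_LT_RT, disj_TT_RT⟩),
      Finset.sum_union disj_LT_TT, LTs, TTs, RTs,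
      Finset.sum_image (fun x hx y hy h =>
        injOn_LTv (Finset.mem_coe.mpr hx) (Finset.mem_coe.mpr hy) h),
      Finset.sum_image (fun x hx y hy h =>
        injOn_TTv (Finset.mem_coe.mpr hx) (Finset.mem_coe.mpr hy) h),
      Finset.sum_image (fun x hx y hy h =>
        injOn_RTv (Finset.mem_coe.mpr hx) (Finset.mem_coe.mpr hy) h)]
    have s1 : ∑ i ∈ Finset.range K, outdeg f.E (LTv i) = c1 lT := by
      rw [Finset.sum_congr rfl
        (fun i hi => outdeg_LTv f hbd (Finset.mem_range.mp hi))]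
      simp only [c1]
      rw [count_eq_sum true lT, hlT]
    have s2 : ∑ i ∈ Finset.range L, outdeg f.E (TTv K i) = c1 t := by
      rw [Finset.sum_congr rfl
        (fun i hi => outdeg_TTv f hbd (Finset.mem_range.mp hi))]
      simp only [c1]
      rw [count_eq_sum true t, ht]
    have s3 : ∑ i ∈ Finset.range M, outdeg f.E (RTv K L i) = 0 :=
      Finset.sum_eq_zero (fun i hi =>
        outdeg_right f (Or.inl ⟨i, Finset.mem_range.mp hi, rfl⟩))
    rw [s1, s2, s3]
    omega
  have hWspecOut : ∑ v ∈ ((Sfin K L M N).filter (fun v => ¬ Even (v.1 + v.2))).filter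
        (fun v => inLRset K L M N v ∨ inTBset K L M N v), outdeg f.E v = c0 lB + c0 b := by
    rw [white_special_eq f hNKL,
      Finset.sum_union (Finset.disjoint_union_left.mpr ⟨disj_LB_RB hNKL, disj_BB_RB⟩),
      Finset.sum_union disj_LB_BB, LBs, BBs, RBs,
      Finset.sum_image (fun x hx y hy h =>
        injOn_LBv (Finset.mem_coe.mpr hx) (Finset.mem_coe.mpr hy) h),
      Finset.sum_image (fun x hx y hy h =>
        injOn_BBv (Finset.mem_coe.mpr hx) (Finset.mem_coe.mpr hy) h),
      Finset.sum_image (fun x hx y hy h =>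
        injOn_RBv (Finset.mem_coe.mpr hx) (Finset.mem_coe.mpr hy) h)]
    have s1 : ∑ i ∈ Finset.range (M + N - K), outdeg f.E (LBv i) = c0 lB := by
      rw [Finset.sum_congr rfl
        (fun i hi => outdeg_LBv f hbd (Finset.mem_range.mp hi))]
      simp only [c0]
      rw [count_eq_sum false lB, hlB]
    have s2 : ∑ i ∈ Finset.range (K + L - N), outdeg f.E (BBv K M N i) = c0 b := by
      rw [Finset.sum_congr rfl
        (fun i hi => outdeg_BBv f hbd (Finset.mem_range.mp hi))]
      simp only [c0]
      rw [count_eq_sum false b, hb]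
    have s3 : ∑ i ∈ Finset.range N, outdeg f.E (RBv K L M N i) = 0 :=
      Finset.sum_eq_zero (fun i hi =>
        outdeg_right f (Or.inr ⟨i, Finset.mem_range.mp hi, rfl⟩))
    rw [s1, s2, s3]
    omega
  have hWspecIn : ∑ v ∈ ((Sfin K L M N).filter (fun v => ¬ Even (v.1 + v.2))).filter
        (fun v => inLRset K L M N v ∨ inTBset K L M N v), indeg f.E v = c1 b + c1 rB := by
    rw [white_special_eq f hNKL,
      Finset.sum_union (Finset.disjoint_union_left.mpr ⟨disj_LB_RB hNKL, disj_BB_RB⟩),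
      Finset.sum_union disj_LB_BB, LBs, BBs, RBs,
      Finset.sum_image (fun x hx y hy h =>
        injOn_LBv (Finset.mem_coe.mpr hx) (Finset.mem_coe.mpr hy) h),
      Finset.sum_image (fun x hx y hy h =>
        injOn_BBv (Finset.mem_coe.mpr hx) (Finset.mem_coe.mpr hy) h),
      Finset.sum_image (fun x hx y hy h =>
        injOn_RBv (Finset.mem_coe.mpr hx) (Finset.mem_coe.mpr hy) h)]
    have s1 : ∑ i ∈ Finset.range (M + N - K), indeg f.E (LBv i) = 0 :=
      Finset.sum_eq_zero (fun i hi =>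
        indeg_left f (Or.inr ⟨i, Finset.mem_range.mp hi, rfl⟩))
    have s2 : ∑ i ∈ Finset.range (K + L - N), indeg f.E (BBv K M N i) = c1 b := by
      rw [Finset.sum_congr rfl
        (fun i hi => indeg_BBv f hbd (Finset.mem_range.mp hi))]
      simp only [c1]
      rw [count_eq_sum true b, hb]
    have s3 : ∑ i ∈ Finset.range N, indeg f.E (RBv K L M N i) = c1 rB := by
      rw [Finset.sum_congr rfl
        (fun i hi => indeg_RBv f hbd (Finset.mem_range.mp hi))]
      simp only [c1]
      rw [count_eq_sum true rB, hrB]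
    rw [s1, s2, s3]
    omega
  -- the two global balance identities
  have hE1 : ∑ v ∈ (Sfin K L M N).filter (fun v => Even (v.1 + v.2)), indeg f.E v
      = ∑ v ∈ (Sfin K L M N).filter (fun v => ¬ Even (v.1 + v.2)), outdeg f.E v := by
    rw [sum_indeg f (fun v => Even (v.1 + v.2)),
      sum_outdeg f (fun v => ¬ Even (v.1 + v.2))]
    congr 1
    exact Finset.filter_congr (fun e he => edge_parity f he)
  have hE2 : ∑ v ∈ (Sfin K L M N).filter (fun v => ¬ Even (v.1 + v.2)), indeg f.E v
      = ∑ v ∈ (Sfin K L M N).filter (fun v => Even (v.1 + v.2)), outdeg f.E v := by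
    rw [sum_indeg f (fun v => ¬ Even (v.1 + v.2)),
      sum_outdeg f (fun v => Even (v.1 + v.2))]
    congr 1
    refine Finset.filter_congr (fun e he => ?_)
    have h := edge_parity f he
    tauto
  -- decompose the four sums
  have dec1 : ∑ v ∈ (Sfin K L M N).filter (fun v => Even (v.1 + v.2)), indeg f.E v
      = (c0 t + c0 rT) + (((Sfin K L M N).filter (fun v => Even (v.1 + v.2))).filter
          (fun v => ¬(inLRset K L M N v ∨ inTBset K L M N v))).card := by
    rw [← Finset.sum_filter_add_sum_filter_not
      ((Sfin K L M N).filter (fun v => Even (v.1 + v.2)))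
      (fun v => inLRset K L M N v ∨ inTBset K L M N v) (indeg f.E),
      hBspecIn]
    exact congrArg (HAdd.hAdd _) (by
      rw [Finset.card_eq_sum_ones]
      exact Finset.sum_congr rfl (fun v hv => by
        simp only [Finset.mem_filter] at hv
        exact (hflow v hv.1.1 hv.2).1))
  have dec2 : ∑ v ∈ (Sfin K L M N).filter (fun v => ¬ Even (v.1 + v.2)), outdeg f.E v
      = (c0 lB + c0 b) + (((Sfin K L M N).filter (fun v => ¬ Even (v.1 + v.2))).filter
          (fun v => ¬(inLRset K L M N v ∨ inTBset K L M N v))).card := by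
    rw [← Finset.sum_filter_add_sum_filter_not
      ((Sfin K L M N).filter (fun v => ¬ Even (v.1 + v.2)))
      (fun v => inLRset K L M N v ∨ inTBset K L M N v) (outdeg f.E),
      hWspecOut]
    exact congrArg (HAdd.hAdd _) (by
      rw [Finset.card_eq_sum_ones]
      exact Finset.sum_congr rfl (fun v hv => by
        simp only [Finset.mem_filter] at hv
        exact (hflow v hv.1.1 hv.2).2))
  have dec3 : ∑ v ∈ (Sfin K L M N).filter (fun v => ¬ Even (v.1 + v.2)), indeg f.E v
      = (c1 b + c1 rB) + (((Sfin K L M N).filter (fun v => ¬ Even (v.1 + v.2))).filter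
          (fun v => ¬(inLRset K L M N v ∨ inTBset K L M N v))).card := by
    rw [← Finset.sum_filter_add_sum_filter_not
      ((Sfin K L M N).filter (fun v => ¬ Even (v.1 + v.2)))
      (fun v => inLRset K L M N v ∨ inTBset K L M N v) (indeg f.E),
      hWspecIn]
    exact congrArg (HAdd.hAdd _) (by
      rw [Finset.card_eq_sum_ones]
      exact Finset.sum_congr rfl (fun v hv => by
        simp only [Finset.mem_filter] at hv
        exact (hflow v hv.1.1 hv.2).1))
  have dec4 : ∑ v ∈ (Sfin K L M N).filter (fun v => Even (v.1 + v.2)), outdeg f.E v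
      = (c1 lT + c1 t) + (((Sfin K L M N).filter (fun v => Even (v.1 + v.2))).filter
          (fun v => ¬(inLRset K L M N v ∨ inTBset K L M N v))).card := by
    rw [← Finset.sum_filter_add_sum_filter_not
      ((Sfin K L M N).filter (fun v => Even (v.1 + v.2)))
      (fun v => inLRset K L M N v ∨ inTBset K L M N v) (outdeg f.E),
      hBspecOut]
    exact congrArg (HAdd.hAdd _) (by
      rw [Finset.card_eq_sum_ones]
      exact Finset.sum_congr rfl (fun v hv => by
        simp only [Finset.mem_filter] at hv
        exact (hflow v hv.1.1 hv.2).2))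
  -- cardinality bookkeeping
  have hBcard : ((Sfin K L M N).filter (fun v => Even (v.1 + v.2))).card
      = (K + L + M) + (((Sfin K L M N).filter (fun v => Even (v.1 + v.2))).filter
          (fun v => ¬(inLRset K L M N v ∨ inTBset K L M N v))).card := by
    rw [← Finset.card_filter_add_card_filter_not
      (s := (Sfin K L M N).filter (fun v => Even (v.1 + v.2)))
      (p := fun v => inLRset K L M N v ∨ inTBset K L M N v),
      black_special_eq f hKMN, card_black_special]
  have hWcard : ((Sfin K L M N).filter (fun v => ¬ Even (v.1 + v.2))).card
      = ((M + N - K) + (K + L - N) + N)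
        + (((Sfin K L M N).filter (fun v => ¬ Even (v.1 + v.2))).filter
          (fun v => ¬(inLRset K L M N v ∨ inTBset K L M N v))).card := by
    rw [← Finset.card_filter_add_card_filter_not
      (s := (Sfin K L M N).filter (fun v => ¬ Even (v.1 + v.2)))
      (p := fun v => inLRset K L M N v ∨ inTBset K L M N v),
      white_special_eq f hNKL, card_white_special hNKL]
  have hPar := parity_count (K := K) (L := L) (M := M) (N := N) hKMN hNKL
  -- word length identities
  have w1 : c0 lT + c1 lT = K := by
    simp only [c0, c1]; rw [count_false_add_count_true, hlT]
  have w2 : c0 t + c1 t = L := by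
    simp only [c0, c1]; rw [count_false_add_count_true, ht]
  have w3 : c0 rT + c1 rT = M := by
    simp only [c0, c1]; rw [count_false_add_count_true, hrT]
  have w4 : c0 rB + c1 rB = N := by
    simp only [c0, c1]; rw [count_false_add_count_true, hrB]
  have w5 : c0 b + c1 b = K + L - N := by
    simp only [c0, c1]; rw [count_false_add_count_true, hb]
  have w6 : c0 lB + c1 lB = M + N - K := by
    simp only [c0, c1]; rw [count_false_add_count_true, hlB]
  rw [dec1, dec2] at hE1
  rw [dec3, dec4] at hE2
  constructor <;> omega

end
end HFPLpaper2014
end
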